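/- arXiv:0809.4554 — 5 statements merged into one kernel-verified Lean document; each statement's English description precedes it below -/
import Mathlib

section
/- The family of functions {x ↦ F(x,y) : y ∈ [0,∞)²} is measure determining on [0,∞)²: if μ and μ' are finite Borel measures on [0,∞)² such that ∫ F(x,y) μ(dx) = ∫ F(x,y) μ'(dx) for every y ∈ [0,∞)², then μ = μ'. -/
open MeasureTheory ProbabilityTheory Filter Set
open scoped ENNReal NNReal Topology

noncomputable section

/-- `E`, the boundary of the closed first quadrant: `([0,∞)×{0}) ∪ ({0}×[0,∞))`. -/
def Eset : Set (ℝ × ℝ) := {p | (0 ≤ p.1 ∧ p.2 = 0) ∨ (p.1 = 0 ∧ 0 ≤ p.2)}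

/-- The open first quadrant `(0,∞)²`. -/
def openQuad : Set (ℝ × ℝ) := {p | 0 < p.1 ∧ 0 < p.2}

/-- The closed first quadrant `[0,∞)²`. -/
def closedQuad : Set (ℝ × ℝ) := {p | 0 ≤ p.1 ∧ 0 ≤ p.2}

/-- Density of the harmonic measure `Q_(u,v)` on the horizontal part of `E`. -/
def qdensH (u v ubar : ℝ) : ℝ :=
  (4 / Real.pi) * (u * v * ubar) / (4 * u ^ 2 * v ^ 2 + (ubar ^ 2 + v ^ 2 - u ^ 2) ^ 2)

/-- Density of the harmonic measure `Q_(u,v)` on the vertical part of `E`. -/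
def qdensV (u v vbar : ℝ) : ℝ :=
  (4 / Real.pi) * (u * v * vbar) / (4 * u ^ 2 * v ^ 2 + (vbar ^ 2 + u ^ 2 - v ^ 2) ^ 2)

/-- The harmonic measure `Q_x` of planar Brownian motion in the first quadrant:
for `x` in the open quadrant it has the explicit densities on the two parts of `E`,
and `Q_x = δ_x` otherwise (in particular for `x ∈ E`). -/
def Qmeas (x : ℝ × ℝ) : Measure (ℝ × ℝ) :=
  if 0 < x.1 ∧ 0 < x.2 then
    (((volume.restrict (Ici (0 : ℝ))).withDensity fun ubar =>
        ENNReal.ofReal (qdensH x.1 x.2 ubar)).map fun ubar : ℝ => (ubar, (0 : ℝ)))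
      + (((volume.restrict (Ici (0 : ℝ))).withDensity fun vbar =>
        ENNReal.ofReal (qdensV x.1 x.2 vbar)).map fun vbar : ℝ => ((0 : ℝ), vbar))
  else Measure.dirac x

/-- The lozenge product `x ◊ y = −(x₁+x₂)(y₁+y₂) + i(x₁−x₂)(y₁−y₂)`. -/
def loz (x y : ℝ × ℝ) : ℂ :=
  -((((x.1 + x.2) * (y.1 + y.2) : ℝ)) : ℂ)
    + Complex.I * ((((x.1 - x.2) * (y.1 - y.2) : ℝ)) : ℂ)

/-- The self-duality function `F(x,y) = exp(x ◊ y)`. -/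
def Fdual (x y : ℝ × ℝ) : ℂ := Complex.exp (loz x y)

/-- The σ-finite measure `ν` on `E`, the vague limit of `ε⁻¹ Q_(1,ε)`. -/
def nuMeas : Measure (ℝ × ℝ) :=
  (((volume.restrict (Ici (0 : ℝ))).withDensity fun u =>
      ENNReal.ofReal ((4 / Real.pi) * u / ((1 - u) ^ 2 * (1 + u) ^ 2))).map
    fun u : ℝ => (u, (0 : ℝ)))
  + (((volume.restrict (Ici (0 : ℝ))).withDensity fun v =>
      ENNReal.ofReal ((4 / Real.pi) * v / (1 + v ^ 2) ^ 2)).map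
    fun v : ℝ => ((0 : ℝ), v))

/-- A planar Brownian motion started at `b`: continuous paths, `B 0 = b` a.s., the two
centered coordinate processes are independent, have independent increments
(each increment is independent of the past of the whole path), and Gaussian increments
`B i t − B i s ∼ N(0, t − s)`. -/
structure IsPlanarBM {Ω : Type*} [MeasurableSpace Ω] (P : Measure Ω)
    (B : ℝ → Ω → ℝ × ℝ) (b : ℝ × ℝ) : Prop where
  meas : ∀ t : ℝ, Measurable (B t)
  cont : ∀ ω, Continuous fun t => B t ω
  init : ∀ᵐ ω ∂P, B 0 ω = b
  indep_coords : IndepFun (fun ω => fun t : ℝ => (B t ω).1 - b.1)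
      (fun ω => fun t : ℝ => (B t ω).2 - b.2) P
  gauss_fst : ∀ s t : ℝ, 0 ≤ s → s ≤ t →
      P.map (fun ω => (B t ω).1 - (B s ω).1) = gaussianReal 0 (Real.toNNReal (t - s))
  gauss_snd : ∀ s t : ℝ, 0 ≤ s → s ≤ t →
      P.map (fun ω => (B t ω).2 - (B s ω).2) = gaussianReal 0 (Real.toNNReal (t - s))
  indepIncr_fst : ∀ s t : ℝ, 0 ≤ s → s ≤ t →
      IndepFun (fun ω => (B t ω).1 - (B s ω).1) (fun ω => fun r : ℝ => B (min r s) ω) P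
  indepIncr_snd : ∀ s t : ℝ, 0 ≤ s → s ≤ t →
      IndepFun (fun ω => (B t ω).2 - (B s ω).2) (fun ω => fun r : ℝ => B (min r s) ω) P

/-- The first positive time at which the path `f` leaves the set `S`
(`sInf ∅ = 0` by convention; the infimum is attained in `ℝ` whenever the set is nonempty). -/
def exitTime (f : ℝ → ℝ × ℝ) (S : Set (ℝ × ℝ)) : ℝ := sInf {t : ℝ | 0 < t ∧ f t ∉ S}

/-- The rectangular cone `[−z₁,∞) × [−z₂,∞)` northeast of `−z`. -/
def cone (z : ℝ × ℝ) : Set (ℝ × ℝ) := Ici (-z.1) ×ˢ Ici (-z.2)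

/-- Partial derivative `∂₁ f` along the horizontal axis (one-sided at `0`). -/
def d1 (f : ℝ × ℝ → ℂ) (u : ℝ) : ℂ := derivWithin (fun t : ℝ => f (t, 0)) (Ici 0) u

/-- Partial derivative `∂₂ f` along the vertical axis (one-sided at `0`). -/
def d2 (f : ℝ × ℝ → ℂ) (v : ℝ) : ℂ := derivWithin (fun t : ℝ => f (0, t)) (Ici 0) v

/-- The space `C_l(E)`: continuous on `E` with equal finite limits along both axes. -/
def MemCl (g : ℝ × ℝ → ℂ) : Prop :=
  ContinuousOn g Eset ∧ ∃ L : ℂ, Tendsto (fun u : ℝ => g (u, 0)) atTop (𝓝 L) ∧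
    Tendsto (fun v : ℝ => g (0, v)) atTop (𝓝 L)

/-- The space `C_l²(E)` of twice differentiable elements of `C_l(E)`. -/
structure MemCl2 (f : ℝ × ℝ → ℂ) : Prop where
  contOn : ContinuousOn f Eset
  limits : ∃ L : ℂ, Tendsto (fun u : ℝ => f (u, 0)) atTop (𝓝 L) ∧
      Tendsto (fun v : ℝ => f (0, v)) atTop (𝓝 L)
  diff1 : ∀ u : ℝ, 0 ≤ u → DifferentiableWithinAt ℝ (fun t : ℝ => f (t, 0)) (Ici 0) u
  diff2 : ∀ v : ℝ, 0 ≤ v → DifferentiableWithinAt ℝ (fun t : ℝ => f (0, t)) (Ici 0) v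
  contd1 : ContinuousOn (d1 f) (Ici 0)
  contd2 : ContinuousOn (d2 f) (Ici 0)
  decay1 : Tendsto (fun u : ℝ => (u : ℂ) * d1 f u) atTop (𝓝 0)
  decay2 : Tendsto (fun v : ℝ => (v : ℂ) * d2 f v) atTop (𝓝 0)
  diff11 : ∀ u : ℝ, 0 < u → DifferentiableAt ℝ (d1 f) u
  diff22 : ∀ v : ℝ, 0 < v → DifferentiableAt ℝ (d2 f) v
  bdd2 : ∃ C : ℝ, ∀ r : ℝ, 0 < r → r * (‖deriv (d1 f) r‖ + ‖deriv (d2 f) r‖) ≤ C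

/-- `f†(x₁,x₂) := f(x₂,x₁)`. -/
def swapF (f : ℝ × ℝ → ℂ) : ℝ × ℝ → ℂ := fun x => f (x.2, x.1)

/-- The operator `G₂` (generator part for a drift in direction `(0,1)`). -/
def G2op (f : ℝ × ℝ → ℂ) (x : ℝ × ℝ) : ℂ :=
  if x.1 = 0 then d2 f x.2
  else ((x.1 : ℂ))⁻¹ *
    ∫ y, (f (x.1 • y) - f x - (((x.1 * (y.1 - 1)) : ℝ) : ℂ) * d1 f x.1) ∂nuMeas

/-- The operator `G₁ f := (G₂ f†)†`. -/
def G1op (f : ℝ × ℝ → ℂ) (x : ℝ × ℝ) : ℂ := G2op (swapF f) (x.2, x.1)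

/-- The generator `G^{c,θ} f(x) = c(θ₁−x₁)G₁f(x) + c(θ₂−x₂)G₂f(x)`. -/
def Gop (c : ℝ) (θ : ℝ × ℝ) (f : ℝ × ℝ → ℂ) (x : ℝ × ℝ) : ℂ :=
  (((c * (θ.1 - x.1) : ℝ)) : ℂ) * G1op f x + (((c * (θ.2 - x.2) : ℝ)) : ℂ) * G2op f x

end

open MeasureTheory Filter Set
open scoped Topology


noncomputable section FMDsection
namespace FMD

def zc (x : ℝ × ℝ) : ℂ := (-(x.1 + x.2) : ℝ) + (x.1 - x.2 : ℝ) * Complex.I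

lemma zc_re (x : ℝ × ℝ) : (zc x).re = -(x.1 + x.2) := by simp [zc]

lemma zc_im (x : ℝ × ℝ) : (zc x).im = x.1 - x.2 := by simp [zc]

lemma zc_inj : Function.Injective zc := by
  intro x y hxy
  have h1 : -(x.1 + x.2) = -(y.1 + y.2) := by rw [← zc_re, ← zc_re, hxy]
  have h2 : x.1 - x.2 = y.1 - y.2 := by rw [← zc_im, ← zc_im, hxy]
  have : x.1 = y.1 := by linarith
  have : x.2 = y.2 := by linarith
  exact Prod.ext ‹x.1 = y.1› ‹x.2 = y.2›

lemma continuous_zc : Continuous zc := by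
  unfold zc; fun_prop

lemma conj_zc (x : ℝ × ℝ) :
    (starRingEnd ℂ) (zc x) = (-(x.1 + x.2) : ℝ) - (x.1 - x.2 : ℝ) * Complex.I := by
  simp [zc, map_add, map_mul, Complex.conj_I, Complex.conj_ofReal]
  ring

lemma Fdual_eq (x y : ℝ × ℝ) :
    Fdual x y = Complex.exp ((y.1 : ℂ) * zc x + (y.2 : ℂ) * (starRingEnd ℂ) (zc x)) := by
  rw [Fdual, conj_zc]
  congr 1
  simp only [loz, zc]
  push_cast
  ring

def Psi (x : ℝ × ℝ) : ℂ × ℂ :=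
  (Complex.exp (zc x), Complex.exp ((Real.sqrt 2 : ℝ) * zc x))

lemma continuous_Psi : Continuous Psi := by
  exact ((Complex.continuous_exp.comp continuous_zc).prodMk
    (Complex.continuous_exp.comp ((continuous_const.mul continuous_zc))))

lemma Psi_inj : Function.Injective Psi := by
  intro x y hxy
  have h1 : Complex.exp (zc x) = Complex.exp (zc y) := congrArg Prod.fst hxy
  have h2 : Complex.exp ((Real.sqrt 2 : ℝ) * zc x)
      = Complex.exp ((Real.sqrt 2 : ℝ) * zc y) := congrArg Prod.snd hxy
  rw [Complex.exp_eq_exp_iff_exists_int] at h1 h2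
  obtain ⟨n, hn⟩ := h1
  obtain ⟨m, hm⟩ := h2
  rw [hn] at hm
  have hkey : ((Real.sqrt 2 * n - m : ℝ) : ℂ) * (2 * Real.pi * Complex.I) = 0 := by
    push_cast
    linear_combination hm
  have h2pi : (2 * (Real.pi : ℂ) * Complex.I) ≠ 0 := by
    simp [Complex.I_ne_zero, Real.pi_ne_zero]
  have hr : (Real.sqrt 2 * n - m : ℝ) = 0 := by
    have := mul_eq_zero.mp hkey
    rcases this with h | h
    · exact_mod_cast h
    · exact absurd h h2pi
  have hn0 : n = 0 := by
    by_contra hne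
    have : Real.sqrt 2 = (m : ℝ) / (n : ℝ) := by
      field_simp at hr ⊢
      linarith
    have : Irrational ((m : ℝ) / (n : ℝ)) := this ▸ irrational_sqrt_two
    have : ¬ Irrational ((m : ℝ) / (n : ℝ)) := by
      rw [show ((m : ℝ) / (n : ℝ)) = ((m / n : ℚ) : ℝ) by push_cast; ring]
      exact Rat.not_irrational _
    contradiction
  apply zc_inj
  rw [hn, hn0]
  push_cast
  ring


/-- the monomial identity -/
lemma monomial_eq (a b c e : ℕ) (x : ℝ × ℝ) :
    (Psi x).1 ^ a * (starRingEnd ℂ) (Psi x).1 ^ b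
      * (Psi x).2 ^ c * (starRingEnd ℂ) (Psi x).2 ^ e
    = Fdual x (a + Real.sqrt 2 * c, b + Real.sqrt 2 * e) := by
  have hc1 : (starRingEnd ℂ) (Psi x).1 = Complex.exp ((starRingEnd ℂ) (zc x)) := by
    rw [Psi, Complex.exp_conj]
  have hc2 : (starRingEnd ℂ) (Psi x).2
      = Complex.exp ((Real.sqrt 2 : ℂ) * (starRingEnd ℂ) (zc x)) := by
    rw [Psi, ← Complex.exp_conj, map_mul, Complex.conj_ofReal]
  rw [Fdual_eq, hc1, hc2, Psi]
  simp only [← Complex.exp_nat_mul, ← Complex.exp_add]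
  congr 1
  push_cast
  ring

lemma monomial_mem (a b c e : ℕ) :
    ((a : ℝ) + Real.sqrt 2 * c, (b : ℝ) + Real.sqrt 2 * e) ∈ closedQuad := by
  constructor <;> · simp only; positivity

def Kset : Set (ℂ × ℂ) := closure (Psi '' closedQuad)

lemma norm_Psi_le (x : ℝ × ℝ) (hx : x ∈ closedQuad) : ‖Psi x‖ ≤ 1 := by
  obtain ⟨h1, h2⟩ := hx
  have hre : (zc x).re ≤ 0 := by rw [zc_re]; linarith
  have e1 : ‖(Psi x).1‖ ≤ 1 := by
    rw [Psi]
    simp only [Complex.norm_exp]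
    exact Real.exp_le_one_iff.mpr hre
  have e2 : ‖(Psi x).2‖ ≤ 1 := by
    rw [Psi]
    simp only [Complex.norm_exp]
    apply Real.exp_le_one_iff.mpr
    have : ((Real.sqrt 2 : ℂ) * zc x).re = Real.sqrt 2 * (zc x).re := by
      simp [Complex.mul_re]
    rw [this]
    have := Real.sqrt_nonneg 2
    nlinarith
  calc ‖Psi x‖ = max ‖(Psi x).1‖ ‖(Psi x).2‖ := rfl
    _ ≤ 1 := max_le e1 e2

lemma isCompact_Kset : IsCompact Kset := by
  apply Metric.isCompact_of_isClosed_isBounded isClosed_closure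
  apply Bornology.IsBounded.closure
  rw [isBounded_iff_forall_norm_le]
  exact ⟨1, by rintro w ⟨x, hx, rfl⟩; exact norm_Psi_le x hx⟩

instance : CompactSpace Kset := isCompact_iff_compactSpace.mp isCompact_Kset

def projQ (x : ℝ × ℝ) : ℝ × ℝ := (max x.1 0, max x.2 0)

lemma projQ_mem (x : ℝ × ℝ) : projQ x ∈ closedQuad :=
  ⟨le_max_right _ _, le_max_right _ _⟩

lemma projQ_eq {x : ℝ × ℝ} (hx : x ∈ closedQuad) : projQ x = x := by
  obtain ⟨h1, h2⟩ := hx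
  simp [projQ, max_eq_left h1, max_eq_left h2]

lemma continuous_projQ : Continuous projQ := by unfold projQ; fun_prop

def Phi (x : ℝ × ℝ) : Kset :=
  ⟨Psi (projQ x), subset_closure ⟨projQ x, projQ_mem x, rfl⟩⟩

lemma continuous_Phi : Continuous Phi :=
  Continuous.subtype_mk (continuous_Psi.comp continuous_projQ) _

def c1 : C(Kset, ℂ) := ⟨fun k => (k : ℂ × ℂ).1, continuous_fst.comp continuous_subtype_val⟩
def c2 : C(Kset, ℂ) := ⟨fun k => (k : ℂ × ℂ).2, continuous_snd.comp continuous_subtype_val⟩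

lemma monomial_apply (a b c e : ℕ) {x : ℝ × ℝ} (hx : x ∈ closedQuad) :
    (c1 ^ a * star c1 ^ b * c2 ^ c * star c2 ^ e) (Phi x)
      = Fdual x (a + Real.sqrt 2 * c, b + Real.sqrt 2 * e) := by
  have : (Phi x : ℂ × ℂ) = Psi x := by simp only [Phi, projQ_eq hx]
  simp only [ContinuousMap.mul_apply, ContinuousMap.pow_apply, ContinuousMap.star_apply,
    Complex.star_def, c1, c2, ContinuousMap.coe_mk, this]
  exact monomial_eq a b c e x


lemma integrable_comp (g : C(Kset, ℂ)) (ν : Measure (ℝ × ℝ)) [IsFiniteMeasure ν] :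
    Integrable (fun x => g (Phi x)) ν := by
  refine Integrable.mono' (integrable_const ‖g‖) ?_ ?_
  · exact (g.continuous.comp continuous_Phi).aestronglyMeasurable
  · exact Filter.Eventually.of_forall fun x => g.norm_coe_le_norm (Phi x)

/-- The set of "monomials". -/
def IsMono (m : C(Kset, ℂ)) : Prop :=
  ∃ a b c e : ℕ, m = c1 ^ a * star c1 ^ b * c2 ^ c * star c2 ^ e

lemma mono_closure {m : C(Kset, ℂ)}
    (hm : m ∈ Submonoid.closure (({c1, c2} : Set C(Kset, ℂ)) ∪ star {c1, c2})) :
    IsMono m := by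
  induction hm using Submonoid.closure_induction with
  | mem m hmem =>
    have hstar : (star ({c1, c2} : Set C(Kset, ℂ))) = {star c1, star c2} := by
      ext f; simp [Set.mem_star, Set.star_mem_star]
      constructor
      · rintro (h | h)
        · left; rw [← h]; simp
        · right; rw [← h]; simp
      · rintro (h | h)
        · left; rw [h]; simp
        · right; rw [h]; simp
    rw [hstar] at hmem
    rcases hmem with (h | h) | (h | h)
    · exact ⟨1, 0, 0, 0, by rw [h]; ring⟩
    · exact ⟨0, 0, 1, 0, by rw [h]; ring⟩
    · exact ⟨0, 1, 0, 0, by rw [h]; ring⟩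
    · exact ⟨0, 0, 0, 1, by rw [h]; ring⟩
  | one => exact ⟨0, 0, 0, 0, by ring⟩
  | mul f g _ _ hf hg =>
    obtain ⟨a, b, c, e, rfl⟩ := hf
    obtain ⟨a', b', c', e', rfl⟩ := hg
    exact ⟨a + a', b + b', c + c', e + e', by rw [pow_add, pow_add, pow_add, pow_add]; ring⟩

section Key
variable (μ μ' : Measure (ℝ × ℝ)) [IsFiniteMeasure μ] [IsFiniteMeasure μ']

lemma key (hμ : μ closedQuadᶜ = 0) (hμ' : μ' closedQuadᶜ = 0)
    (h : ∀ y ∈ closedQuad, ∫ x, Fdual x y ∂μ = ∫ x, Fdual x y ∂μ')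
    (g : C(Kset, ℂ)) : ∫ x, g (Phi x) ∂μ = ∫ x, g (Phi x) ∂μ' := by
  -- the ae facts
  have haeμ : ∀ᵐ x ∂μ, x ∈ closedQuad := by
    rw [MeasureTheory.ae_iff]
    exact hμ
  have haeμ' : ∀ᵐ x ∂μ', x ∈ closedQuad := by
    rw [MeasureTheory.ae_iff]
    exact hμ'
  set Q : C(Kset, ℂ) → Prop := fun m => ∫ x, m (Phi x) ∂μ = ∫ x, m (Phi x) ∂μ' with hQ
  -- monomials satisfy Q
  have hmonoQ : ∀ m : C(Kset, ℂ), IsMono m → Q m := by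
    rintro m ⟨a, b, c, e, rfl⟩
    have e1 : ∫ x, (c1 ^ a * star c1 ^ b * c2 ^ c * star c2 ^ e) (Phi x) ∂μ
        = ∫ x, Fdual x (a + Real.sqrt 2 * c, b + Real.sqrt 2 * e) ∂μ :=
      integral_congr_ae (haeμ.mono fun x hx => monomial_apply a b c e hx)
    have e2 : ∫ x, (c1 ^ a * star c1 ^ b * c2 ^ c * star c2 ^ e) (Phi x) ∂μ'
        = ∫ x, Fdual x (a + Real.sqrt 2 * c, b + Real.sqrt 2 * e) ∂μ' :=
      integral_congr_ae (haeμ'.mono fun x hx => monomial_apply a b c e hx)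
    rw [hQ]
    simp only
    rw [e1, e2]
    exact h _ (monomial_mem a b c e)
  -- all elements of the star-subalgebra satisfy Q
  set A : StarSubalgebra ℂ C(Kset, ℂ) := StarAlgebra.adjoin ℂ {c1, c2} with hA
  have hAQ : ∀ m ∈ A, Q m := by
    intro m hm
    clear g
    have hm' : m ∈ Submodule.span ℂ
        ((Submonoid.closure (({c1, c2} : Set C(Kset, ℂ)) ∪ star {c1, c2}) : Set C(Kset, ℂ))) := by
      rw [← StarAlgebra.adjoin_eq_span]
      exact hm
    clear hm
    induction hm' using Submodule.span_induction with
    | mem f hf => exact hmonoQ f (mono_closure hf)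
    | zero => simp [hQ]
    | add f g' _ _ hf hg =>
      rw [hQ]
      simp only [ContinuousMap.add_apply]
      rw [integral_add (integrable_comp f μ) (integrable_comp g' μ),
        integral_add (integrable_comp f μ') (integrable_comp g' μ')]
      rw [hQ] at hf hg
      rw [hf, hg]
    | smul r f _ hf =>
      rw [hQ]
      simp only [ContinuousMap.smul_apply]
      rw [integral_smul, integral_smul]
      rw [hQ] at hf
      rw [hf]
  -- A separates points
  have hsep : A.SeparatesPoints := by
    intro p q hpq
    have hne : (p : ℂ × ℂ) ≠ (q : ℂ × ℂ) := fun hc => hpq (Subtype.ext hc)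
    by_cases h1 : (p : ℂ × ℂ).1 = (q : ℂ × ℂ).1
    · have h2 : (p : ℂ × ℂ).2 ≠ (q : ℂ × ℂ).2 := by
        intro h2; exact hne (Prod.ext h1 h2)
      exact ⟨_, ⟨c2, StarAlgebra.subset_adjoin ℂ _ (by simp), rfl⟩, h2⟩
    · exact ⟨_, ⟨c1, StarAlgebra.subset_adjoin ℂ _ (by simp), rfl⟩, h1⟩
  have hdense : Dense (A : Set C(Kset, ℂ)) := by
    have htop := ContinuousMap.starSubalgebra_topologicalClosure_eq_top_of_separatesPoints A hsep
    rw [dense_iff_closure_eq]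
    have : (A.topologicalClosure : Set C(Kset, ℂ)) = closure (A : Set C(Kset, ℂ)) := rfl
    rw [← this, htop]
    rfl
  -- the two integration functionals are Lipschitz
  have hlip : ∀ (ν : Measure (ℝ × ℝ)) [IsFiniteMeasure ν],
      LipschitzWith (ν univ).toNNReal (fun g : C(Kset, ℂ) => ∫ x, g (Phi x) ∂ν) := by
    intro ν _
    apply LipschitzWith.of_dist_le_mul
    intro f g'
    rw [dist_eq_norm, ← integral_sub (integrable_comp f ν) (integrable_comp g' ν)]
    calc ‖∫ x, (f (Phi x) - g' (Phi x)) ∂ν‖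
        ≤ dist f g' * (ν univ).toReal := by
          apply norm_integral_le_of_norm_le_const
          apply Filter.Eventually.of_forall
          intro x
          rw [← dist_eq_norm]
          exact ContinuousMap.dist_apply_le_dist (Phi x)
      _ = ((ν univ).toNNReal : ℝ) * dist f g' := by
          rw [show ((ν univ).toNNReal : ℝ) = (ν univ).toReal from rfl]
          ring
  have heq : (fun g : C(Kset, ℂ) => ∫ x, g (Phi x) ∂μ)
      = fun g : C(Kset, ℂ) => ∫ x, g (Phi x) ∂μ' := by
    apply Continuous.ext_on hdense (hlip μ).continuous (hlip μ').continuous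
    intro m hm
    exact hAQ m hm
  exact congrFun heq g

end Key

lemma measurable_Phi : Measurable Phi := continuous_Phi.measurable

theorem main (μ μ' : Measure (ℝ × ℝ))
    [IsFiniteMeasure μ] [IsFiniteMeasure μ']
    (hμ : μ closedQuadᶜ = 0) (hμ' : μ' closedQuadᶜ = 0)
    (h : ∀ y ∈ closedQuad, ∫ x, Fdual x y ∂μ = ∫ x, Fdual x y ∂μ') :
    μ = μ' := by
  have haeμ : ∀ᵐ x ∂μ, x ∈ closedQuad := by rw [MeasureTheory.ae_iff]; exact hμ
  have haeμ' : ∀ᵐ x ∂μ', x ∈ closedQuad := by rw [MeasureTheory.ae_iff]; exact hμ'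
  -- the pushforward measures on Kset
  set ν := μ.map Phi with hν
  set ν' := μ'.map Phi with hν'
  have hνfin : IsFiniteMeasure ν := by
    constructor
    rw [hν, Measure.map_apply measurable_Phi MeasurableSet.univ]
    exact measure_lt_top μ _
  have hν'fin : IsFiniteMeasure ν' := by
    constructor
    rw [hν', Measure.map_apply measurable_Phi MeasurableSet.univ]
    exact measure_lt_top μ' _
  -- equality of pushforwards
  have hνν' : ν = ν' := by
    apply ext_of_forall_lintegral_eq_of_IsFiniteMeasure
    intro f
    set freal : BoundedContinuousFunction Kset ℝ :=
      BoundedContinuousFunction.comp _ (isometry_subtype_coe.lipschitz) f with hfreal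
    have hfreal_apply : ∀ k : Kset, freal k = ((f k : ℝ≥0) : ℝ) := fun k => rfl
    have hint : ∀ (ρ : Measure (ℝ × ℝ)) [IsFiniteMeasure ρ],
        Integrable (fun x => ((f (Phi x) : ℝ≥0) : ℝ)) ρ := by
      intro ρ _
      refine Integrable.mono' (integrable_const ‖freal‖) ?_ ?_
      · apply Continuous.aestronglyMeasurable
        exact NNReal.continuous_coe.comp (f.continuous.comp continuous_Phi)
      · apply Filter.Eventually.of_forall
        intro x
        rw [← hfreal_apply]
        exact freal.norm_coe_le_norm (Phi x)
    have hmf : Measurable fun k : Kset => ((f k : ℝ≥0) : ℝ≥0∞) :=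
      (ENNReal.continuous_coe.comp f.continuous).measurable
    rw [hν, hν', lintegral_map hmf measurable_Phi, lintegral_map hmf measurable_Phi]
    rw [lintegral_coe_eq_integral _ (hint μ), lintegral_coe_eq_integral _ (hint μ')]
    congr 1
    -- pass to the complex-valued continuous map
    have hg : ∫ x, (((f (Phi x) : ℝ≥0) : ℝ) : ℂ) ∂μ = ∫ x, (((f (Phi x) : ℝ≥0) : ℝ) : ℂ) ∂μ' := by
      exact key μ μ' hμ hμ' h
        ⟨fun k => (((f k : ℝ≥0) : ℝ) : ℂ),
          Complex.continuous_ofReal.comp (NNReal.continuous_coe.comp f.continuous)⟩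
    apply Complex.ofReal_injective
    calc ((∫ x, ((f (Phi x) : ℝ≥0) : ℝ) ∂μ : ℝ) : ℂ)
        = ∫ x, (((f (Phi x) : ℝ≥0) : ℝ) : ℂ) ∂μ := integral_ofReal.symm
      _ = ∫ x, (((f (Phi x) : ℝ≥0) : ℝ) : ℂ) ∂μ' := hg
      _ = ((∫ x, ((f (Phi x) : ℝ≥0) : ℝ) ∂μ' : ℝ) : ℂ) := integral_ofReal
  -- transfer back
  have hemb : MeasurableEmbedding Psi := continuous_Psi.measurableEmbedding Psi_inj
  have hcqm : MeasurableSet closedQuad :=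
    (measurable_fst measurableSet_Ici).inter (measurable_snd measurableSet_Ici)
  ext S hS
  set T := S ∩ closedQuad with hT
  have hTm : MeasurableSet T := hS.inter hcqm
  have hTsub : T ⊆ closedQuad := inter_subset_right
  -- the measurable set in Kset
  set U : Set Kset := Subtype.val ⁻¹' (Psi '' T) with hU
  have hUm : MeasurableSet U :=
    measurable_subtype_coe (hemb.measurableSet_image.mpr hTm)
  have hpre : Phi ⁻¹' U = projQ ⁻¹' T := by
    ext x
    simp only [hU, mem_preimage, Phi]
    constructor
    · rintro ⟨t, htT, hte⟩
      exact Psi_inj hte ▸ htT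
    · intro hx
      exact ⟨projQ x, hx, rfl⟩
  have hproj : ∀ (ρ : Measure (ℝ × ℝ)), (∀ᵐ x ∂ρ, x ∈ closedQuad) → ρ (projQ ⁻¹' T) = ρ T := by
    intro ρ hρ
    apply measure_congr
    rw [Filter.eventuallyEq_set]
    filter_upwards [hρ] with x hxQ
    rw [mem_preimage, projQ_eq hxQ]
  have hST : ∀ (ρ : Measure (ℝ × ℝ)), (∀ᵐ x ∂ρ, x ∈ closedQuad) → ρ S = ρ T := by
    intro ρ hρ
    apply measure_congr
    rw [Filter.eventuallyEq_set]
    filter_upwards [hρ] with x hxQ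
    simp only [hT, mem_inter_iff, iff_self_and]
    exact fun _ => hxQ
  calc μ S = μ T := hST μ haeμ
    _ = μ (projQ ⁻¹' T) := (hproj μ haeμ).symm
    _ = μ (Phi ⁻¹' U) := by rw [hpre]
    _ = ν U := (Measure.map_apply measurable_Phi hUm).symm
    _ = ν' U := by rw [hνν']
    _ = μ' (Phi ⁻¹' U) := Measure.map_apply measurable_Phi hUm
    _ = μ' (projQ ⁻¹' T) := by rw [hpre]
    _ = μ' T := hproj μ' haeμ'
    _ = μ' S := (hST μ' haeμ').symm

end FMD
end FMDsection

/-- the family `{x ↦ F(x,y) : y ∈ [0,∞)²}` is measure determining on `[0,∞)²`: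
two finite Borel measures on `[0,∞)²` with the same integrals of all these functions agree. -/
theorem Fdual_measure_determining (μ μ' : Measure (ℝ × ℝ))
    [IsFiniteMeasure μ] [IsFiniteMeasure μ']
    (hμ : μ closedQuadᶜ = 0) (hμ' : μ' closedQuadᶜ = 0)
    (h : ∀ y ∈ closedQuad, ∫ x, Fdual x y ∂μ = ∫ x, Fdual x y ∂μ') :
    μ = μ' :=
  FMD.main μ μ' hμ hμ' h
end

section
/- For every bounded Borel measurable f : E → ℂ, every r ≥ 0 and every x ∈ [0,∞)², one has ∫_E f(r·z) Q_x(dz) = ∫_E f(z) Q_{r·x}(dz), where r·z denotes scalar multiplication in ℝ². -/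
open MeasureTheory ProbabilityTheory Filter Set
open scoped ENNReal NNReal Topology

open MeasureTheory Filter Set
open scoped Topology


namespace HMScalingAux

lemma den_pos {u v : ℝ} (hu : 0 < u) (hv : 0 < v) (s : ℝ) :
    0 < 4 * u ^ 2 * v ^ 2 + (s ^ 2 + v ^ 2 - u ^ 2) ^ 2 := by positivity

lemma qdensH_nonneg {u v : ℝ} (hu : 0 < u) (hv : 0 < v) {t : ℝ} (ht : 0 ≤ t) :
    0 ≤ qdensH u v t := by
  have := Real.pi_pos
  unfold qdensH
  positivity

lemma qdensV_eq (u v t : ℝ) : qdensV u v t = qdensH v u t := by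
  unfold qdensV qdensH
  ring_nf

lemma meas_qH (u v : ℝ) : Measurable fun t => ENNReal.ofReal (qdensH u v t) := by
  apply Measurable.ennreal_ofReal
  unfold qdensH
  fun_prop

lemma hasDerivAt_G {u v : ℝ} (hu : 0 < u) (hv : 0 < v) (t : ℝ) :
    HasDerivAt (fun t : ℝ => (1 / Real.pi) * Real.arctan ((t ^ 2 + v ^ 2 - u ^ 2) / (2 * u * v)))
      (qdensH u v t) t := by
  have h1 : HasDerivAt (fun t : ℝ => (t ^ 2 + v ^ 2 - u ^ 2) / (2 * u * v))
      ((2 * t) / (2 * u * v)) t := by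
    have h : HasDerivAt (fun t : ℝ => t ^ 2 + v ^ 2 - u ^ 2) (2 * t) t := by
      simpa using ((hasDerivAt_pow 2 t).add_const (v ^ 2)).sub_const (u ^ 2)
    exact h.div_const _
  have h2 := (Real.hasDerivAt_arctan ((t ^ 2 + v ^ 2 - u ^ 2) / (2 * u * v))).comp t h1
  have h3 := h2.const_mul (1 / Real.pi)
  refine h3.congr_deriv ?_
  have hπ := Real.pi_ne_zero
  have huv : (2 * u * v) ≠ 0 := by positivity
  have hden : 4 * u ^ 2 * v ^ 2 + (t ^ 2 + v ^ 2 - u ^ 2) ^ 2 ≠ 0 := (den_pos hu hv t).ne'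
  have hd : (1 + ((t ^ 2 + v ^ 2 - u ^ 2) / (2 * u * v)) ^ 2) ≠ 0 := by positivity
  unfold qdensH
  field_simp
  ring

lemma tendsto_G {u v : ℝ} (hu : 0 < u) (hv : 0 < v) :
    Tendsto (fun t : ℝ => (1 / Real.pi) * Real.arctan ((t ^ 2 + v ^ 2 - u ^ 2) / (2 * u * v)))
      atTop (𝓝 ((1 / Real.pi) * (Real.pi / 2))) := by
  have h1 : Tendsto (fun t : ℝ => (t ^ 2 + v ^ 2 - u ^ 2) / (2 * u * v)) atTop atTop := by
    apply Tendsto.atTop_div_const (by positivity : (0:ℝ) < 2 * u * v)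
    have h : Tendsto (fun t : ℝ => t ^ 2) atTop atTop := tendsto_pow_atTop two_ne_zero
    simpa [add_sub_assoc] using tendsto_atTop_add_const_right atTop (v ^ 2 - u ^ 2) h
  exact ((Real.tendsto_arctan_atTop.mono_right nhdsWithin_le_nhds).comp h1).const_mul _

lemma integrableOn_qdensH {u v : ℝ} (hu : 0 < u) (hv : 0 < v) :
    IntegrableOn (qdensH u v) (Ioi 0) :=
  integrableOn_Ioi_deriv_of_nonneg' (fun t _ => hasDerivAt_G hu hv t)
    (fun t ht => qdensH_nonneg hu hv ht.out.le) (tendsto_G hu hv)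

lemma integral_qdensH {u v : ℝ} (hu : 0 < u) (hv : 0 < v) :
    ∫ t in Ioi (0:ℝ), qdensH u v t
      = 1 / 2 - (1 / Real.pi) * Real.arctan ((v ^ 2 - u ^ 2) / (2 * u * v)) := by
  rw [integral_Ioi_of_hasDerivAt_of_nonneg' (fun t _ => hasDerivAt_G hu hv t)
    (fun t ht => qdensH_nonneg hu hv ht.out.le) (tendsto_G hu hv)]
  have hπ := Real.pi_ne_zero
  have h : (1 / Real.pi) * (Real.pi / 2) = 1 / 2 := by field_simp
  rw [h]
  norm_num

lemma lintegral_qdensH {u v : ℝ} (hu : 0 < u) (hv : 0 < v) :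
    ∫⁻ t, ENNReal.ofReal (qdensH u v t) ∂(volume.restrict (Ici (0:ℝ)))
      = ENNReal.ofReal (1 / 2 - (1 / Real.pi) * Real.arctan ((v ^ 2 - u ^ 2) / (2 * u * v))) := by
  rw [← Measure.restrict_congr_set Ioi_ae_eq_Ici,
    ← ofReal_integral_eq_lintegral_ofReal (integrableOn_qdensH hu hv)
      ((ae_restrict_iff' measurableSet_Ioi).2 (ae_of_all _ fun t ht =>
        qdensH_nonneg hu hv ht.le)),
    integral_qdensH hu hv]

lemma mass_aux {u v : ℝ} (hu : 0 < u) (hv : 0 < v) :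
    ENNReal.ofReal (1 / 2 - (1 / Real.pi) * Real.arctan ((v ^ 2 - u ^ 2) / (2 * u * v)))
      + ENNReal.ofReal (1 / 2 - (1 / Real.pi) * Real.arctan ((u ^ 2 - v ^ 2) / (2 * v * u)))
      = 1 := by
  have hπ := Real.pi_pos
  have key : ∀ y : ℝ, 0 ≤ 1 / 2 - (1 / Real.pi) * Real.arctan y := by
    intro y
    have h1 : Real.arctan y < Real.pi / 2 := Real.arctan_lt_pi_div_two y
    have h3 : (1 / Real.pi) * Real.arctan y ≤ (1 / Real.pi) * (Real.pi / 2) :=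
      mul_le_mul_of_nonneg_left h1.le (by positivity)
    have h2 : (1 / Real.pi) * (Real.pi / 2) = 1 / 2 := by field_simp
    linarith [h2 ▸ h3]
  rw [← ENNReal.ofReal_add (key _) (key _),
    show (u ^ 2 - v ^ 2) / (2 * v * u) = -((v ^ 2 - u ^ 2) / (2 * u * v)) by ring,
    Real.arctan_neg]
  norm_num

lemma isProb (x : ℝ × ℝ) : IsProbabilityMeasure (Qmeas x) := by
  by_cases h : 0 < x.1 ∧ 0 < x.2
  · constructor
    rw [Qmeas, if_pos h, Measure.add_apply,
      Measure.map_apply (measurable_prodMk_right) MeasurableSet.univ,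
      Measure.map_apply (measurable_prodMk_left) MeasurableSet.univ,
      preimage_univ, preimage_univ,
      withDensity_apply _ MeasurableSet.univ, withDensity_apply _ MeasurableSet.univ,
      setLIntegral_univ, setLIntegral_univ]
    have hV : (fun t => ENNReal.ofReal (qdensV x.1 x.2 t))
        = fun t => ENNReal.ofReal (qdensH x.2 x.1 t) := by
      funext t; rw [qdensV_eq]
    rw [hV, lintegral_qdensH h.1 h.2, lintegral_qdensH h.2 h.1]
    exact mass_aux h.1 h.2
  · rw [Qmeas, if_neg h]
    infer_instance

lemma qdensH_scale {r u v : ℝ} (hr : 0 < r) (hu : 0 < u) (hv : 0 < v) (t : ℝ) :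
    r⁻¹ * qdensH u v (r⁻¹ * t) = qdensH (r * u) (r * v) t := by
  have h1 := (den_pos hu hv (r⁻¹ * t)).ne'
  have h2 := (den_pos (mul_pos hr hu) (mul_pos hr hv) t).ne'
  have hπ := Real.pi_ne_zero
  have hr' := hr.ne'
  unfold qdensH
  field_simp

lemma map_mul_withDensity {r : ℝ} (hr : 0 < r) {φ : ℝ → ℝ≥0∞} (hφ : Measurable φ) :
    ((volume.restrict (Ici (0:ℝ))).withDensity φ).map (fun s => r * s)
      = (volume.restrict (Ici (0:ℝ))).withDensity
          (fun t => ENNReal.ofReal r⁻¹ * φ (r⁻¹ * t)) := by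
  have hg : Measurable (fun s : ℝ => r * s) := measurable_const_mul r
  have hpre : (fun s : ℝ => r * s) ⁻¹' (Ici 0) = Ici 0 := by
    ext s
    simp [mul_nonneg_iff_of_pos_left hr]
  have hmap : (volume.restrict (Ici (0:ℝ))).map (fun s => r * s)
      = (ENNReal.ofReal r⁻¹) • volume.restrict (Ici (0:ℝ)) := by
    conv_lhs => rw [← hpre]
    rw [← Measure.restrict_map hg measurableSet_Ici, Real.map_volume_mul_left hr.ne',
      Measure.restrict_smul, abs_of_pos (inv_pos.2 hr)]
  ext A hA
  rw [Measure.map_apply hg hA, withDensity_apply _ (hg hA), withDensity_apply _ hA]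
  have key := setLIntegral_map (μ := volume.restrict (Ici (0:ℝ))) hA
      (f := fun t => φ (r⁻¹ * t)) (hφ.comp (measurable_const_mul r⁻¹)) hg
  simp only [inv_mul_cancel_left₀ hr.ne'] at key
  rw [← key, hmap, Measure.restrict_smul, lintegral_smul_measure]
  exact (lintegral_const_mul (ENNReal.ofReal r⁻¹)
    (f := fun a => φ (r⁻¹ * a)) (hφ.comp (measurable_const_mul r⁻¹))).symm

lemma Qmeas_map {r : ℝ} (hr : 0 < r) {x : ℝ × ℝ} (hx : x ∈ closedQuad) :
    (Qmeas x).map (fun z : ℝ × ℝ => r • z) = Qmeas (r • x) := by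
  have hsm : Measurable (fun z : ℝ × ℝ => r • z) := (continuous_const_smul r).measurable
  have hx1 : 0 ≤ x.1 := hx.1
  have hx2 : 0 ≤ x.2 := hx.2
  have e1 : (r • x).1 = r * x.1 := rfl
  have e2 : (r • x).2 = r * x.2 := rfl
  by_cases h : 0 < x.1 ∧ 0 < x.2
  · have h' : 0 < (r • x).1 ∧ 0 < (r • x).2 := by
      rw [e1, e2]
      exact ⟨mul_pos hr h.1, mul_pos hr h.2⟩
    rw [Qmeas, Qmeas, if_pos h, if_pos h', Measure.map_add _ _ hsm]
    congr 1
    · rw [Measure.map_map hsm (measurable_prodMk_right)]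
      have hcomp : (fun z : ℝ × ℝ => r • z) ∘ (fun u : ℝ => (u, (0:ℝ)))
          = (fun u : ℝ => (u, (0:ℝ))) ∘ (fun s : ℝ => r * s) := by
        funext s
        simp [Prod.smul_mk, smul_eq_mul]
      rw [hcomp, ← Measure.map_map (measurable_prodMk_right)
        (measurable_const_mul r), map_mul_withDensity hr (meas_qH x.1 x.2)]
      refine congrArg _ (congrArg _ (funext fun t => ?_))
      rw [← ENNReal.ofReal_mul (by positivity : (0:ℝ) ≤ r⁻¹), qdensH_scale hr h.1 h.2 t, e1, e2]
    · rw [Measure.map_map hsm (measurable_prodMk_left)]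
      have hcomp : (fun z : ℝ × ℝ => r • z) ∘ (fun v : ℝ => ((0:ℝ), v))
          = (fun v : ℝ => ((0:ℝ), v)) ∘ (fun s : ℝ => r * s) := by
        funext s
        simp [Prod.smul_mk, smul_eq_mul]
      have hVd : (fun t => ENNReal.ofReal (qdensV x.1 x.2 t))
          = fun t => ENNReal.ofReal (qdensH x.2 x.1 t) := by
        funext t; rw [qdensV_eq]
      have hVd' : (fun t => ENNReal.ofReal (qdensV (r • x).1 (r • x).2 t))
          = fun t => ENNReal.ofReal (qdensH ((r • x).2) ((r • x).1) t) := by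
        funext t; rw [qdensV_eq]
      rw [hcomp, ← Measure.map_map (measurable_prodMk_left)
        (measurable_const_mul r), hVd, hVd',
        map_mul_withDensity hr (meas_qH x.2 x.1)]
      refine congrArg _ (congrArg _ (funext fun t => ?_))
      rw [← ENNReal.ofReal_mul (by positivity : (0:ℝ) ≤ r⁻¹), qdensH_scale hr h.2 h.1 t, e1, e2]
  · have hz : x.1 = 0 ∨ x.2 = 0 := by
      rcases not_and_or.1 h with h1 | h1
      · exact Or.inl (le_antisymm (not_lt.1 h1) hx1)
      · exact Or.inr (le_antisymm (not_lt.1 h1) hx2)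
    have h' : ¬(0 < (r • x).1 ∧ 0 < (r • x).2) := by
      rcases hz with h1 | h1
      · intro hc
        have hcc := hc.1
        rw [e1, h1, mul_zero] at hcc
        exact lt_irrefl 0 hcc
      · intro hc
        have hcc := hc.2
        rw [e2, h1, mul_zero] at hcc
        exact lt_irrefl 0 hcc
    rw [Qmeas, Qmeas, if_neg h, if_neg h', Measure.map_dirac' hsm]

end HMScalingAux

/-- the scaling relation `∫_E f(r·z) Q_x(dz) = ∫_E f(z) Q_{r·x}(dz)` for every
bounded Borel `f : E → ℂ`, `r ≥ 0` and `x ∈ [0,∞)²`. -/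
theorem harmonic_measure_scaling (f : ℝ × ℝ → ℂ) (hf : Measurable f)
    (C : ℝ) (hfb : ∀ w, ‖f w‖ ≤ C)
    (r : ℝ) (hr : 0 ≤ r) (x : ℝ × ℝ) (hx : x ∈ closedQuad) :
    ∫ z, f (r • z) ∂(Qmeas x) = ∫ z, f z ∂(Qmeas (r • x)) := by
  rcases hr.eq_or_lt with rfl | hrpos
  · haveI := HMScalingAux.isProb x
    simp only [zero_smul]
    rw [integral_const]
    have h0 : Qmeas (0 : ℝ × ℝ) = Measure.dirac 0 := by
      rw [Qmeas, if_neg (by simp)]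
    rw [h0, integral_dirac]
    simp [measure_univ]
  · rw [← HMScalingAux.Qmeas_map hrpos hx,
      integral_map ((continuous_const_smul r).measurable.aemeasurable)
        hf.aestronglyMeasurable]
end

section
/- The map x ↦ Q_x is weakly continuous on [0,∞)²: if (x_n) is a sequence in [0,∞)² with x_n → x, then ∫_E f dQ_{x_n} → ∫_E f dQ_x for every bounded continuous function f : E → ℝ. -/
open MeasureTheory ProbabilityTheory Filter Set
open scoped ENNReal NNReal Topology

open MeasureTheory Filter Set
open scoped Topology


namespace HMWCAux

open Real

/-- Standard Cauchy density. -/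
noncomputable def c0 (t : ℝ) : ℝ := (π * (1 + t ^ 2))⁻¹

lemma c0_pos (t : ℝ) : 0 < c0 t := by
  have : 0 < π * (1 + t ^ 2) := by positivity
  exact inv_pos.2 this

lemma c0_cont : Continuous c0 := by
  have h : ∀ t : ℝ, π * (1 + t ^ 2) ≠ 0 := fun t => by positivity
  exact (continuous_const.mul (continuous_const.add (continuous_pow 2))).inv₀ h

lemma c0_eq (t : ℝ) : c0 t = π⁻¹ * (1 + t ^ 2)⁻¹ := by rw [c0, mul_inv]

lemma integrable_c0 : Integrable c0 := by
  have : c0 = fun t => π⁻¹ * (1 + t ^ 2)⁻¹ := funext c0_eq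
  rw [this]
  exact integrable_inv_one_add_sq.const_mul _

lemma integral_c0 : ∫ t, c0 t = 1 := by
  simp_rw [c0_eq]
  rw [integral_const_mul, integral_univ_inv_one_add_sq]
  exact inv_mul_cancel₀ pi_ne_zero

lemma c0_neg (t : ℝ) : c0 (-t) = c0 t := by simp [c0]

/-- Inverse of the squaring homeomorphism `E ≃ ℝ`. -/
noncomputable def psi (s : ℝ) : ℝ × ℝ := (Real.sqrt s, Real.sqrt (-s))

lemma psi_mem (s : ℝ) : psi s ∈ Eset := by
  rcases le_total 0 s with h | h
  · exact Or.inl ⟨Real.sqrt_nonneg _, Real.sqrt_eq_zero_of_nonpos (by linarith)⟩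
  · exact Or.inr ⟨Real.sqrt_eq_zero_of_nonpos h, Real.sqrt_nonneg _⟩

lemma psi_cont : Continuous psi :=
  Real.continuous_sqrt.prodMk (Real.continuous_sqrt.comp continuous_neg)

lemma psi_sq (s : ℝ) (hs : 0 ≤ s) : psi (s ^ 2) = (s, 0) := by
  have h2 : -(s ^ 2) ≤ 0 := neg_nonpos.2 (sq_nonneg s)
  simp [psi, Real.sqrt_sq hs, Real.sqrt_eq_zero_of_nonpos h2]

lemma psi_neg_sq (s : ℝ) (hs : 0 ≤ s) : psi (-(s ^ 2)) = (0, s) := by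
  have h2 : -(s ^ 2) ≤ 0 := neg_nonpos.2 (sq_nonneg s)
  simp [psi, Real.sqrt_sq hs, Real.sqrt_eq_zero_of_nonpos h2]

lemma eset_meas : MeasurableSet Eset := by
  have h1 : MeasurableSet {p : ℝ × ℝ | 0 ≤ p.1 ∧ p.2 = 0} := by
    rw [Set.setOf_and]
    exact (measurableSet_le measurable_const measurable_fst).inter
      (measurable_snd (measurableSet_singleton 0))
  have h2 : MeasurableSet {p : ℝ × ℝ | p.1 = 0 ∧ 0 ≤ p.2} := by
    rw [Set.setOf_and]
    exact (measurable_fst (measurableSet_singleton 0)).inter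
      (measurableSet_le measurable_const measurable_snd)
  have : Eset = {p : ℝ × ℝ | 0 ≤ p.1 ∧ p.2 = 0} ∪ {p : ℝ × ℝ | p.1 = 0 ∧ 0 ≤ p.2} := by
    ext p; rfl
  rw [this]; exact h1.union h2

lemma qdens_denom_pos {u v : ℝ} (hu : 0 < u) (hv : 0 < v) (s : ℝ) :
    0 < 4 * u ^ 2 * v ^ 2 + (s ^ 2 + v ^ 2 - u ^ 2) ^ 2 := by positivity

lemma qdensH_cont {u v : ℝ} (hu : 0 < u) (hv : 0 < v) : Continuous (qdensH u v) := by
  apply Continuous.div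
  · continuity
  · continuity
  · exact fun s => ne_of_gt (qdens_denom_pos hu hv s)

lemma qdensH_nonneg {u v : ℝ} (hu : 0 < u) (hv : 0 < v) {s : ℝ} (hs : 0 ≤ s) :
    0 ≤ qdensH u v s := by
  unfold qdensH
  have h1 : 0 ≤ 4 / π := by positivity
  have h2 : 0 ≤ u * v * s := by positivity
  exact div_nonneg (mul_nonneg h1 h2) (qdens_denom_pos hu hv s).le

lemma qdensV_swap (u v s : ℝ) : qdensV u v s = qdensH v u s := by
  unfold qdensH qdensV; ring

/-- The key algebraic identity relating the Cauchy density to `qdensH`. -/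
lemma dens_eq {u v : ℝ} (hu : 0 < u) (hv : 0 < v) {s : ℝ} (hs : 0 < s) :
    |2 * s / (2 * (u * v))| * c0 ((s ^ 2 - (u ^ 2 - v ^ 2)) / (2 * (u * v))) =
      qdensH u v s := by
  have habs : |2 * s / (2 * (u * v))| = 2 * s / (2 * (u * v)) :=
    abs_of_pos (by positivity)
  have hd : (0:ℝ) < 4 * u ^ 2 * v ^ 2 + (s ^ 2 + v ^ 2 - u ^ 2) ^ 2 :=
    qdens_denom_pos hu hv s
  have hπ : (0:ℝ) < π := pi_pos
  rw [habs, c0, qdensH]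
  have h1 : u ≠ 0 := hu.ne'
  have h2 : v ≠ 0 := hv.ne'
  field_simp [hd.ne', pi_ne_zero]
  ring

lemma image_T {u v : ℝ} (hu : 0 < u) (hv : 0 < v) :
    (fun s : ℝ => (s ^ 2 - (u ^ 2 - v ^ 2)) / (2 * (u * v))) '' Set.Ioi 0 =
      Set.Ioi (-(u ^ 2 - v ^ 2) / (2 * (u * v))) := by
  have hb : (0:ℝ) < 2 * (u * v) := by positivity
  ext y
  simp only [Set.mem_image, Set.mem_Ioi]
  constructor
  · rintro ⟨s, hs, rfl⟩
    rw [div_lt_div_iff_of_pos_right hb]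
    nlinarith
  · intro hy
    have hpos : 0 < 2 * (u * v) * y + (u ^ 2 - v ^ 2) := by
      rw [div_lt_iff₀ hb] at hy
      nlinarith
    refine ⟨Real.sqrt (2 * (u * v) * y + (u ^ 2 - v ^ 2)), Real.sqrt_pos.2 hpos, ?_⟩
    rw [Real.sq_sqrt hpos.le]
    field_simp
    ring

/-- Change of variables: the Cauchy integral on a half-line equals the `qdensH` integral. -/
lemma cov_eq {u v : ℝ} (hu : 0 < u) (hv : 0 < v) (g : ℝ → ℝ) :
    (∫ t in Set.Ioi (-(u ^ 2 - v ^ 2) / (2 * (u * v))),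
        g (u ^ 2 - v ^ 2 + 2 * (u * v) * t) * c0 t) =
      ∫ s in Set.Ioi (0:ℝ), g (s ^ 2) * qdensH u v s := by
  have hb : (0:ℝ) < 2 * (u * v) := by positivity
  have hderiv : ∀ s ∈ Set.Ioi (0:ℝ),
      HasDerivWithinAt (fun s : ℝ => (s ^ 2 - (u ^ 2 - v ^ 2)) / (2 * (u * v)))
        (2 * s / (2 * (u * v))) (Set.Ioi 0) s := by
    intro s _
    have h1 := ((hasDerivAt_pow 2 s).sub_const (u ^ 2 - v ^ 2)).div_const (2 * (u * v))
    simpa using h1.hasDerivWithinAt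
  have hinj : Set.InjOn (fun s : ℝ => (s ^ 2 - (u ^ 2 - v ^ 2)) / (2 * (u * v)))
      (Set.Ioi 0) := by
    intro s1 h1 s2 h2 h
    simp only at h
    have hsq : s1 ^ 2 = s2 ^ 2 := by
      field_simp at h; linarith
    calc s1 = Real.sqrt (s1 ^ 2) := (Real.sqrt_sq (le_of_lt h1)).symm
    _ = Real.sqrt (s2 ^ 2) := by rw [hsq]
    _ = s2 := Real.sqrt_sq (le_of_lt h2)
  have key := integral_image_eq_integral_abs_deriv_smul measurableSet_Ioi hderiv hinj
    (fun t => g (u ^ 2 - v ^ 2 + 2 * (u * v) * t) * c0 t)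
  rw [image_T hu hv] at key
  rw [key]
  apply setIntegral_congr_fun measurableSet_Ioi
  intro s hs
  have harg : u ^ 2 - v ^ 2 + 2 * (u * v) * ((s ^ 2 - (u ^ 2 - v ^ 2)) / (2 * (u * v)))
      = s ^ 2 := by field_simp; ring
  simp only [smul_eq_mul, harg]
  rw [← dens_eq hu hv hs]
  ring

/-- Integrability transfer along the change of variables. -/
lemma cov_int {u v : ℝ} (hu : 0 < u) (hv : 0 < v) (g : ℝ → ℝ)
    (h : IntegrableOn (fun t => g (u ^ 2 - v ^ 2 + 2 * (u * v) * t) * c0 t)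
      (Set.Ioi (-(u ^ 2 - v ^ 2) / (2 * (u * v))))) :
    IntegrableOn (fun s => g (s ^ 2) * qdensH u v s) (Set.Ioi 0) := by
  have hb : (0:ℝ) < 2 * (u * v) := by positivity
  have hderiv : ∀ s ∈ Set.Ioi (0:ℝ),
      HasDerivWithinAt (fun s : ℝ => (s ^ 2 - (u ^ 2 - v ^ 2)) / (2 * (u * v)))
        (2 * s / (2 * (u * v))) (Set.Ioi 0) s := by
    intro s _
    have h1 := ((hasDerivAt_pow 2 s).sub_const (u ^ 2 - v ^ 2)).div_const (2 * (u * v))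
    simpa using h1.hasDerivWithinAt
  have hinj : Set.InjOn (fun s : ℝ => (s ^ 2 - (u ^ 2 - v ^ 2)) / (2 * (u * v)))
      (Set.Ioi 0) := by
    intro s1 h1 s2 h2 h
    simp only at h
    have hsq : s1 ^ 2 = s2 ^ 2 := by
      field_simp at h; linarith
    calc s1 = Real.sqrt (s1 ^ 2) := (Real.sqrt_sq (le_of_lt h1)).symm
    _ = Real.sqrt (s2 ^ 2) := by rw [hsq]
    _ = s2 := Real.sqrt_sq (le_of_lt h2)
  rw [← image_T hu hv] at h
  rw [integrableOn_image_iff_integrableOn_abs_deriv_smul measurableSet_Ioi hderiv hinj] at h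
  apply h.congr_fun _ measurableSet_Ioi
  intro s hs
  have harg : u ^ 2 - v ^ 2 + 2 * (u * v) * ((s ^ 2 - (u ^ 2 - v ^ 2)) / (2 * (u * v)))
      = s ^ 2 := by field_simp; ring
  simp only [smul_eq_mul, harg]
  rw [← dens_eq hu hv hs]
  ring

lemma integral_Qmeas_interior (f : ℝ × ℝ → ℝ) (hf : ContinuousOn f Eset)
    (C : ℝ) (hfb : ∀ w ∈ Eset, |f w| ≤ C) (u v : ℝ) (hu : 0 < u) (hv : 0 < v) :
    ∫ z, f z ∂(Qmeas (u, v)) =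
      ∫ t, f (psi (u ^ 2 - v ^ 2 + 2 * (u * v) * t)) * c0 t := by
  have hg : Continuous (fun y => f (psi y)) := hf.comp_continuous psi_cont psi_mem
  have hgb : ∀ y, |f (psi y)| ≤ C := fun y => hfb _ (psi_mem y)
  -- the continuous extension of f to the plane
  have hFcont : Continuous (fun z : ℝ × ℝ => f (psi (z.1 ^ 2 - z.2 ^ 2))) :=
    hg.comp ((continuous_fst.pow 2).sub (continuous_snd.pow 2))
  have hFE : ∀ z ∈ Eset, f z = f (psi (z.1 ^ 2 - z.2 ^ 2)) := by
    rintro ⟨z1, z2⟩ hz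
    rcases hz with ⟨h1, h2⟩ | ⟨h1, h2⟩
    · simp only at h1 h2 ⊢
      rw [h2]
      have : z1 ^ 2 - (0:ℝ) ^ 2 = z1 ^ 2 := by ring
      rw [this, psi_sq z1 h1]
    · simp only at h1 h2 ⊢
      rw [h1]
      have : (0:ℝ) ^ 2 - z2 ^ 2 = -(z2 ^ 2) := by ring
      rw [this, psi_neg_sq z2 h2]
  -- measurability of the two embeddings
  have hι : Measurable (fun s : ℝ => (s, (0:ℝ))) :=
    (continuous_id.prodMk continuous_const).measurable
  have hι' : Measurable (fun s : ℝ => ((0:ℝ), s)) :=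
    (continuous_const.prodMk continuous_id).measurable
  have hQ : Qmeas (u, v) =
      (((volume.restrict (Set.Ici (0 : ℝ))).withDensity fun s =>
          ENNReal.ofReal (qdensH u v s)).map fun s : ℝ => (s, (0 : ℝ)))
        + (((volume.restrict (Set.Ici (0 : ℝ))).withDensity fun s =>
          ENNReal.ofReal (qdensV u v s)).map fun s : ℝ => ((0 : ℝ), s)) := by
    rw [Qmeas, if_pos ⟨hu, hv⟩]
  -- integrability of the Cauchy-side integrands
  have hGint : Integrable (fun t => f (psi (u ^ 2 - v ^ 2 + 2 * (u * v) * t)) * c0 t) := by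
    have hc : Continuous (fun t : ℝ => f (psi (u ^ 2 - v ^ 2 + 2 * (u * v) * t)) * c0 t) := by
      exact (hg.comp (continuous_const.add (continuous_const.mul continuous_id))).mul c0_cont
    refine (integrable_c0.const_mul C).mono' hc.aestronglyMeasurable (ae_of_all _ fun t => ?_)
    rw [Real.norm_eq_abs, abs_mul, abs_of_pos (c0_pos t)]
    exact mul_le_mul_of_nonneg_right (hgb _) (c0_pos t).le
  have hG'int : Integrable
      (fun t => (fun y => f (psi (-y))) (v ^ 2 - u ^ 2 + 2 * (v * u) * t) * c0 t) := by
    have hc : Continuous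
        (fun t : ℝ => (fun y => f (psi (-y))) (v ^ 2 - u ^ 2 + 2 * (v * u) * t) * c0 t) := by
      exact ((hg.comp continuous_neg).comp
        (continuous_const.add (continuous_const.mul continuous_id))).mul c0_cont
    refine (integrable_c0.const_mul C).mono' hc.aestronglyMeasurable (ae_of_all _ fun t => ?_)
    rw [Real.norm_eq_abs, abs_mul, abs_of_pos (c0_pos t)]
    exact mul_le_mul_of_nonneg_right (hgb _) (c0_pos t).le
  -- integrability of the density-side integrands
  have hIH : IntegrableOn (fun s => f (psi (s ^ 2)) * qdensH u v s) (Set.Ici 0) :=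
    (integrableOn_Ici_iff_integrableOn_Ioi enorm_ne_top).2
      (cov_int hu hv (fun y => f (psi y)) hGint.integrableOn)
  have hIV : IntegrableOn (fun s => f (psi (-(s ^ 2))) * qdensH v u s) (Set.Ici 0) :=
    (integrableOn_Ici_iff_integrableOn_Ioi enorm_ne_top).2
      (cov_int hv hu (fun y => f (psi (-y))) hG'int.integrableOn)
  have hqHmeas : Measurable fun s => ENNReal.ofReal (qdensH u v s) :=
    ((qdensH_cont hu hv).measurable).ennreal_ofReal
  have hqVmeas : Measurable fun s => ENNReal.ofReal (qdensV u v s) := by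
    simp only [qdensV_swap]
    exact ((qdensH_cont hv hu).measurable).ennreal_ofReal
  -- Q is carried by Eset
  have hnull : Qmeas (u, v) Esetᶜ = 0 := by
    rw [hQ, Measure.add_apply, Measure.map_apply hι eset_meas.compl,
      Measure.map_apply hι' eset_meas.compl]
    have hH : ((fun s : ℝ => (s, (0:ℝ))) ⁻¹' Esetᶜ) ⊆ Set.Iio 0 := by
      intro s hs
      by_contra h
      exact hs (Or.inl ⟨not_lt.1 h, rfl⟩)
    have hV : ((fun s : ℝ => ((0:ℝ), s)) ⁻¹' Esetᶜ) ⊆ Set.Iio 0 := by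
      intro s hs
      by_contra h
      exact hs (Or.inr ⟨rfl, not_lt.1 h⟩)
    have hzero : ∀ d : ℝ → ℝ≥0∞, Measurable d →
        ((volume.restrict (Set.Ici (0 : ℝ))).withDensity d) (Set.Iio 0) = 0 := by
      intro d hd
      rw [withDensity_apply _ measurableSet_Iio,
        Measure.restrict_restrict measurableSet_Iio,
        (Set.Iio_disjoint_Ici le_rfl).inter_eq, Measure.restrict_empty,
        lintegral_zero_measure]
    refine le_antisymm ?_ zero_le
    calc _ ≤ ((volume.restrict (Set.Ici (0 : ℝ))).withDensity fun s =>
          ENNReal.ofReal (qdensH u v s)) (Set.Iio 0)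
        + ((volume.restrict (Set.Ici (0 : ℝ))).withDensity fun s =>
          ENNReal.ofReal (qdensV u v s)) (Set.Iio 0) :=
        add_le_add (measure_mono hH) (measure_mono hV)
    _ = 0 := by rw [hzero _ hqHmeas, hzero _ hqVmeas, add_zero]
  have hae : f =ᵐ[Qmeas (u, v)] fun z : ℝ × ℝ => f (psi (z.1 ^ 2 - z.2 ^ 2)) := by
    refine ae_iff.2 (measure_mono_null ?_ hnull)
    intro z hz
    simp only [Set.mem_setOf_eq] at hz
    intro hzE
    exact hz (hFE z hzE)
  rw [integral_congr_ae hae, hQ, integral_add_measure ?h1 ?h2]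
  case h1 =>
    rw [integrable_map_measure hFcont.aestronglyMeasurable hι.aemeasurable]
    rw [integrable_withDensity_iff hqHmeas (ae_of_all _ fun s => ENNReal.ofReal_lt_top)]
    refine hIH.congr_fun ?_ measurableSet_Ici
    intro s hs
    simp only [Function.comp]
    rw [ENNReal.toReal_ofReal (qdensH_nonneg hu hv hs)]
    have : s ^ 2 - (0:ℝ) ^ 2 = s ^ 2 := by ring
    rw [this]
  case h2 =>
    rw [integrable_map_measure hFcont.aestronglyMeasurable hι'.aemeasurable]
    rw [integrable_withDensity_iff hqVmeas (ae_of_all _ fun s => ENNReal.ofReal_lt_top)]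
    refine hIV.congr_fun ?_ measurableSet_Ici
    intro s hs
    simp only [Function.comp]
    rw [ENNReal.toReal_ofReal (by rw [qdensV_swap]; exact qdensH_nonneg hv hu hs),
      qdensV_swap]
    have : (0:ℝ) ^ 2 - s ^ 2 = -(s ^ 2) := by ring
    rw [this]
  -- now compute the two integrals
  have e1 : (∫ z, f (psi (z.1 ^ 2 - z.2 ^ 2))
        ∂(((volume.restrict (Set.Ici (0 : ℝ))).withDensity fun s =>
          ENNReal.ofReal (qdensH u v s)).map fun s : ℝ => (s, (0 : ℝ))))
      = ∫ t in Set.Ioi (-(u ^ 2 - v ^ 2) / (2 * (u * v))),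
          f (psi (u ^ 2 - v ^ 2 + 2 * (u * v) * t)) * c0 t := by
    rw [integral_map hι.aemeasurable hFcont.aestronglyMeasurable]
    calc (∫ s, f (psi ((s, (0:ℝ)).1 ^ 2 - (s, (0:ℝ)).2 ^ 2))
          ∂((volume.restrict (Set.Ici (0 : ℝ))).withDensity fun s =>
            ENNReal.ofReal (qdensH u v s)))
        = ∫ s in Set.Ici (0:ℝ), ((qdensH u v s).toNNReal : ℝ≥0) •
            f (psi ((s, (0:ℝ)).1 ^ 2 - (s, (0:ℝ)).2 ^ 2)) :=
          integral_withDensity_eq_integral_smul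
            ((qdensH_cont hu hv).measurable.real_toNNReal) _
      _ = ∫ s in Set.Ioi (0:ℝ), ((qdensH u v s).toNNReal : ℝ≥0) •
            f (psi ((s, (0:ℝ)).1 ^ 2 - (s, (0:ℝ)).2 ^ 2)) :=
          integral_Ici_eq_integral_Ioi
      _ = ∫ s in Set.Ioi (0:ℝ), f (psi (s ^ 2)) * qdensH u v s := by
          refine setIntegral_congr_fun measurableSet_Ioi fun s hs => ?_
          rw [NNReal.smul_def, Real.coe_toNNReal _ (qdensH_nonneg hu hv (le_of_lt hs))]
          have : (s, (0:ℝ)).1 ^ 2 - (s, (0:ℝ)).2 ^ 2 = s ^ 2 := by ring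
          rw [this, mul_comm]
          simp only [smul_eq_mul]
      _ = _ := (cov_eq hu hv (fun y => f (psi y))).symm
  have e2 : (∫ z, f (psi (z.1 ^ 2 - z.2 ^ 2))
        ∂(((volume.restrict (Set.Ici (0 : ℝ))).withDensity fun s =>
          ENNReal.ofReal (qdensV u v s)).map fun s : ℝ => ((0 : ℝ), s)))
      = ∫ t in Set.Iic (-(u ^ 2 - v ^ 2) / (2 * (u * v))),
          f (psi (u ^ 2 - v ^ 2 + 2 * (u * v) * t)) * c0 t := by
    rw [integral_map hι'.aemeasurable hFcont.aestronglyMeasurable]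
    have hVd : (fun s : ℝ => ENNReal.ofReal (qdensV u v s))
        = fun s : ℝ => ENNReal.ofReal (qdensH v u s) := by
      funext s; rw [qdensV_swap]
    calc (∫ s, f (psi (((0:ℝ), s).1 ^ 2 - ((0:ℝ), s).2 ^ 2))
          ∂((volume.restrict (Set.Ici (0 : ℝ))).withDensity fun s =>
            ENNReal.ofReal (qdensV u v s)))
        = ∫ s in Set.Ici (0:ℝ), ((qdensV u v s).toNNReal : ℝ≥0) •
            f (psi (((0:ℝ), s).1 ^ 2 - ((0:ℝ), s).2 ^ 2)) :=
          integral_withDensity_eq_integral_smul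
            (by rw [show qdensV u v = qdensH v u from funext (qdensV_swap u v)]
                exact (qdensH_cont hv hu).measurable.real_toNNReal) _
      _ = ∫ s in Set.Ioi (0:ℝ), ((qdensV u v s).toNNReal : ℝ≥0) •
            f (psi (((0:ℝ), s).1 ^ 2 - ((0:ℝ), s).2 ^ 2)) :=
          integral_Ici_eq_integral_Ioi
      _ = ∫ s in Set.Ioi (0:ℝ), (fun y => f (psi (-y))) (s ^ 2) * qdensH v u s := by
          refine setIntegral_congr_fun measurableSet_Ioi fun s hs => ?_
          rw [NNReal.smul_def, qdensV_swap,
            Real.coe_toNNReal _ (qdensH_nonneg hv hu (le_of_lt hs))]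
          have : ((0:ℝ), s).1 ^ 2 - ((0:ℝ), s).2 ^ 2 = -(s ^ 2) := by ring
          rw [this, mul_comm]
          simp only [smul_eq_mul]
      _ = ∫ t in Set.Ioi (-(v ^ 2 - u ^ 2) / (2 * (v * u))),
            (fun y => f (psi (-y))) (v ^ 2 - u ^ 2 + 2 * (v * u) * t) * c0 t :=
          (cov_eq hv hu (fun y => f (psi (-y)))).symm
      _ = ∫ t in Set.Ioi ((u ^ 2 - v ^ 2) / (2 * (u * v))),
            (fun x => f (psi (u ^ 2 - v ^ 2 + 2 * (u * v) * x)) * c0 x) (-t) := by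
          have hend : -(v ^ 2 - u ^ 2) / (2 * (v * u)) = (u ^ 2 - v ^ 2) / (2 * (u * v)) := by
            ring
          rw [hend]
          refine setIntegral_congr_fun measurableSet_Ioi fun t _ => ?_
          simp only
          rw [c0_neg]
          congr 2
          ring
      _ = ∫ t in Set.Iic (-((u ^ 2 - v ^ 2) / (2 * (u * v)))),
            f (psi (u ^ 2 - v ^ 2 + 2 * (u * v) * t)) * c0 t := by
          exact integral_comp_neg_Ioi ((u ^ 2 - v ^ 2) / (2 * (u * v))) (fun x => f (psi (u ^ 2 - v ^ 2 + 2 * (u * v) * x)) * c0 x)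
      _ = ∫ t in Set.Iic (-(u ^ 2 - v ^ 2) / (2 * (u * v))),
            f (psi (u ^ 2 - v ^ 2 + 2 * (u * v) * t)) * c0 t := by
          rw [neg_div]
  rw [e1, e2, add_comm]
  exact intervalIntegral.integral_Iic_add_Ioi hGint.integrableOn hGint.integrableOn

lemma integral_Qmeas (f : ℝ × ℝ → ℝ) (hf : ContinuousOn f Eset)
    (C : ℝ) (hfb : ∀ w ∈ Eset, |f w| ≤ C) (p : ℝ × ℝ) (hp : p ∈ closedQuad) :
    ∫ z, f z ∂(Qmeas p) =
      ∫ t, f (psi (p.1 ^ 2 - p.2 ^ 2 + 2 * (p.1 * p.2) * t)) * c0 t := by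
  by_cases hpos : 0 < p.1 ∧ 0 < p.2
  · exact integral_Qmeas_interior f hf C hfb p.1 p.2 hpos.1 hpos.2
  · have hzero : p.1 = 0 ∨ p.2 = 0 := by
      rcases not_and_or.1 hpos with h | h
      · exact Or.inl (le_antisymm (not_lt.1 h) hp.1)
      · exact Or.inr (le_antisymm (not_lt.1 h) hp.2)
    have hb0 : 2 * (p.1 * p.2) = 0 := by
      rcases hzero with h | h <;> rw [h] <;> ring
    rw [Qmeas, if_neg hpos, integral_dirac]
    simp only [hb0, zero_mul, add_zero]
    rw [integral_const_mul, integral_c0, mul_one]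
    rcases hzero with h | h
    · have h2 : p.1 ^ 2 - p.2 ^ 2 = -(p.2 ^ 2) := by rw [h]; ring
      rw [h2, psi_neg_sq _ hp.2]
      rw [show ((0:ℝ), p.2) = p from by rw [← h]]
    · have h2 : p.1 ^ 2 - p.2 ^ 2 = p.1 ^ 2 := by rw [h]; ring
      rw [h2, psi_sq _ hp.1]
      rw [show (p.1, (0:ℝ)) = p from by rw [← h]]

end HMWCAux

/-- weak continuity of `x ↦ Q_x` on `[0,∞)²`: if `x_n → x` in `[0,∞)²` then
`∫_E f dQ_{x_n} → ∫_E f dQ_x` for every bounded continuous `f : E → ℝ`. -/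
theorem harmonic_measure_weak_continuity (x : ℕ → ℝ × ℝ) (x₀ : ℝ × ℝ)
    (hx : ∀ n, x n ∈ closedQuad) (hx₀ : x₀ ∈ closedQuad)
    (hlim : Tendsto x atTop (𝓝 x₀))
    (f : ℝ × ℝ → ℝ) (hf : ContinuousOn f Eset) (C : ℝ) (hfb : ∀ w ∈ Eset, |f w| ≤ C) :
    Tendsto (fun n => ∫ z, f z ∂(Qmeas (x n))) atTop (𝓝 (∫ z, f z ∂(Qmeas x₀))) := by
  classical
  open HMWCAux in
  have key : ∀ p ∈ closedQuad, ∫ z, f z ∂(Qmeas p) =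
      ∫ t, f (HMWCAux.psi (p.1 ^ 2 - p.2 ^ 2 + 2 * (p.1 * p.2) * t)) * HMWCAux.c0 t :=
    fun p hp => HMWCAux.integral_Qmeas f hf C hfb p hp
  simp only [key _ (hx _), key _ hx₀]
  have hg : Continuous (fun y => f (HMWCAux.psi y)) :=
    hf.comp_continuous HMWCAux.psi_cont HMWCAux.psi_mem
  have hgb : ∀ y, |f (HMWCAux.psi y)| ≤ C := fun y => hfb _ (HMWCAux.psi_mem y)
  refine tendsto_integral_of_dominated_convergence (fun t => C * HMWCAux.c0 t)
    (fun n => ?_) (HMWCAux.integrable_c0.const_mul C) (fun n => ae_of_all _ fun t => ?_)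
    (ae_of_all _ fun t => ?_)
  · exact ((hg.comp (continuous_const.add (continuous_const.mul continuous_id))).mul
      HMWCAux.c0_cont).aestronglyMeasurable
  · rw [Real.norm_eq_abs, abs_mul, abs_of_pos (HMWCAux.c0_pos t)]
    exact mul_le_mul_of_nonneg_right (hgb _) (HMWCAux.c0_pos t).le
  · have h1 : Tendsto (fun n => (x n).1) atTop (𝓝 x₀.1) :=
      (continuous_fst.tendsto _).comp hlim
    have h2 : Tendsto (fun n => (x n).2) atTop (𝓝 x₀.2) :=
      (continuous_snd.tendsto _).comp hlim
    have harg : Tendsto (fun n => (x n).1 ^ 2 - (x n).2 ^ 2 + 2 * ((x n).1 * (x n).2) * t)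
        atTop (𝓝 (x₀.1 ^ 2 - x₀.2 ^ 2 + 2 * (x₀.1 * x₀.2) * t)) := by
      exact (((h1.pow 2).sub (h2.pow 2)).add
        (((h1.mul h2).const_mul 2).mul_const t))
    exact ((hg.tendsto _).comp harg).mul_const _
end

section
/- For every (u,v) ∈ [0,∞)², every p ∈ [1,2) and every i ∈ {1,2}, one has ∫_E x_i^p Q_{(u,v)}(dx) ≤ |u² − v²|^{p/2} + 2^{p/2}(uv)^{p/2} / cos(pπ/4) < ∞. -/
open MeasureTheory ProbabilityTheory Filter Set
open scoped ENNReal NNReal Topology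

open MeasureTheory Filter Set
open scoped ENNReal Topology

/- ========================= Auxiliary lemmas ========================= -/

section Aux
open MeasureTheory Filter Set
open scoped ENNReal Topology

private theorem lintegral_image_eq_lintegral_abs_deriv_mul' {s : Set ℝ} {f f' : ℝ → ℝ}
    (hs : MeasurableSet s) (hf' : ∀ x ∈ s, HasDerivWithinAt f (f' x) s x)
    (hf : InjOn f s) (g : ℝ → ℝ≥0∞) :
    ∫⁻ x in f '' s, g x = ∫⁻ x in s, ENNReal.ofReal |f' x| * g (f x) := by
  simpa only [ContinuousLinearMap.det_toSpanSingleton] using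
    lintegral_image_eq_lintegral_abs_det_fderiv_mul volume hs
      (fun x hx => (hf' x hx).hasFDerivWithinAt) hf g

private theorem real_rpow_add_le {x y q : ℝ} (hx : 0 ≤ x) (hy : 0 ≤ y)
    (h0 : 0 ≤ q) (h1 : q ≤ 1) : (x+y) ^ q ≤ x ^ q + y ^ q := by
  have h2 := NNReal.rpow_add_le_add_rpow (x.toNNReal) (y.toNNReal) h0 h1
  have h3 := NNReal.coe_le_coe.2 h2
  push_cast [NNReal.coe_rpow, Real.coe_toNNReal x hx, Real.coe_toNNReal y hy] at h3
  exact h3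

private theorem real_beta {a : ℝ} (h0 : 0 < a) (h1 : a < 1) :
    IntegrableOn (fun x : ℝ => x ^ (a-1) * (1-x) ^ (-a)) (Ioo 0 1) ∧
    ∫ x in Ioo (0:ℝ) 1, x ^ (a-1) * (1-x) ^ (-a) = Real.pi / Real.sin (Real.pi * a) := by
  set cf : ℝ → ℂ := fun x => (x:ℂ) ^ ((a:ℂ)-1) * (1-(x:ℂ)) ^ (-(a:ℂ)) with hcf
  have heq : ∀ x ∈ Ioo (0:ℝ) 1, cf x = ((x ^ (a-1) * (1-x) ^ (-a) : ℝ) : ℂ) := by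
    intro x hx
    show (x:ℂ) ^ ((a:ℂ)-1) * (1-(x:ℂ)) ^ (-(a:ℂ)) = ((x ^ (a-1) * (1-x) ^ (-a) : ℝ) : ℂ)
    rw [Complex.ofReal_mul, Complex.ofReal_cpow hx.1.le,
      Complex.ofReal_cpow (sub_nonneg.2 hx.2.le)]
    push_cast
    ring
  have hconv : IntervalIntegrable cf volume 0 1 := by
    have := Complex.betaIntegral_convergent (u := (a:ℂ)) (v := 1-(a:ℂ))
      (by simpa using h0) (by simp [Complex.sub_re]; linarith)
    simpa [show (1:ℂ)-(a:ℂ)-1 = -(a:ℂ) by ring] using this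
  have hcfIoo : IntegrableOn cf (Ioo 0 1) := hconv.1.mono_set Ioo_subset_Ioc_self
  have hInt : IntegrableOn (fun x : ℝ => x ^ (a-1) * (1-x) ^ (-a)) (Ioo 0 1) := by
    refine (hcfIoo.re).congr ?_
    filter_upwards [ae_restrict_mem measurableSet_Ioo] with x hx
    rw [heq x hx]
    simp [RCLike.re_to_complex]
  refine ⟨hInt, ?_⟩
  have hbeta : Complex.betaIntegral (a:ℂ) (1-(a:ℂ))
      = (Real.pi : ℂ) / Complex.sin (Real.pi * a) := by
    have h2 := Complex.Gamma_mul_Gamma_eq_betaIntegral (s := (a:ℂ)) (t := 1-(a:ℂ))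
      (by simpa using h0) (by simp [Complex.sub_re]; linarith)
    rw [show (a:ℂ) + (1 - (a:ℂ)) = 1 by ring, Complex.Gamma_one, one_mul] at h2
    rw [← h2, Complex.Gamma_mul_Gamma_one_sub]
  have h3 : ∫ x in Ioo (0:ℝ) 1, cf x = Complex.betaIntegral (a:ℂ) (1-(a:ℂ)) := by
    rw [Complex.betaIntegral,
      intervalIntegral.integral_of_le zero_le_one, ← integral_Ioc_eq_integral_Ioo]
    congr 1
    ext x
    rw [hcf]
    norm_num
  calc ∫ x in Ioo (0:ℝ) 1, x ^ (a-1) * (1-x) ^ (-a)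
      = ∫ x in Ioo (0:ℝ) 1, RCLike.re (cf x) := by
        refine setIntegral_congr_fun measurableSet_Ioo fun x hx => ?_
        rw [heq x hx]; simp [RCLike.re_to_complex]
    _ = Real.pi / Real.sin (Real.pi * a) := by
        rw [integral_re hcfIoo, h3, hbeta, ← Complex.ofReal_mul, ← Complex.ofReal_sin,
          ← Complex.ofReal_div]
        exact Complex.ofReal_re _

private theorem beta_lint {a : ℝ} (h0 : 0 < a) (h1 : a < 1) :
    ∫⁻ x in Ioo (0:ℝ) 1, ENNReal.ofReal (x ^ (a-1) * (1-x) ^ (-a))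
      = ENNReal.ofReal (Real.pi / Real.sin (Real.pi * a)) := by
  obtain ⟨hInt, hval⟩ := real_beta h0 h1
  rw [← ofReal_integral_eq_lintegral_ofReal hInt ?_, hval]
  filter_upwards [ae_restrict_mem measurableSet_Ioo] with x hx
  exact mul_nonneg (Real.rpow_nonneg hx.1.le _) (Real.rpow_nonneg (by linarith [hx.2]) _)

private theorem core_lint {q : ℝ} (hq0 : 0 < q) (hq1 : q < 1) :
    ∫⁻ t in Ioi (0:ℝ), ENNReal.ofReal (t ^ q / (1 + t^2))
      = ENNReal.ofReal (Real.pi / (2 * Real.cos (Real.pi * q / 2))) := by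
  set a : ℝ := (q+1)/2 with ha
  have ha0 : 0 < a := by rw [ha]; linarith
  have ha1 : a < 1 := by rw [ha]; linarith
  set φ : ℝ → ℝ := fun t => t^2/(1+t^2) with hφ
  have himg : φ '' Ioi 0 = Ioo 0 1 := by
    apply Subset.antisymm
    · rintro _ ⟨t, ht, rfl⟩
      have ht' : (0:ℝ) < t := ht
      constructor
      · show 0 < t^2/(1+t^2); positivity
      · show t^2/(1+t^2) < 1
        rw [div_lt_one (by positivity)]; linarith
    · intro y hy
      refine ⟨Real.sqrt (y/(1-y)), ?_, ?_⟩
      · exact Real.sqrt_pos.2 (div_pos hy.1 (by linarith [hy.2]))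
      · have h1y : (0:ℝ) < 1 - y := by linarith [hy.2]
        show Real.sqrt (y/(1-y)) ^2 / (1 + Real.sqrt (y/(1-y))^2) = y
        rw [Real.sq_sqrt (div_pos hy.1 h1y).le]
        field_simp
        ring
  have hderiv : ∀ t ∈ Ioi (0:ℝ), HasDerivWithinAt φ (2*t/(1+t^2)^2) (Ioi 0) t := by
    intro t _
    have h := ((hasDerivAt_pow 2 t).div ((hasDerivAt_pow 2 t).const_add 1)
      (by positivity)).hasDerivWithinAt (s := Ioi 0)
    convert h using 1
    · rfl
    · rfl
    · rfl
    norm_num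
    ring
  have hinj : InjOn φ (Ioi 0) := by
    intro x hx y hy h
    have hx' : (0:ℝ) < x := hx
    have hy' : (0:ℝ) < y := hy
    have h2 : x^2 * (1+y^2) = y^2 * (1+x^2) := by
      rw [div_eq_div_iff (by positivity) (by positivity)] at h
      linarith [h]
    have h3 : x^2 = y^2 := by nlinarith [h2]
    calc x = Real.sqrt (x^2) := (Real.sqrt_sq hx'.le).symm
      _ = Real.sqrt (y^2) := by rw [h3]
      _ = y := Real.sqrt_sq hy'.le
  have key := beta_lint ha0 ha1
  rw [← himg, lintegral_image_eq_lintegral_abs_deriv_mul' measurableSet_Ioi hderiv hinj] at key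
  have hptwise : ∀ t ∈ Ioi (0:ℝ),
      ENNReal.ofReal |2*t/(1+t^2)^2| * ENNReal.ofReal ((φ t) ^ (a-1) * (1-(φ t)) ^ (-a))
        = ENNReal.ofReal (2 * (t ^ q / (1 + t^2))) := by
    intro t ht
    have ht' : (0:ℝ) < t := ht
    have hc : (0:ℝ) < 1 + t^2 := by positivity
    rw [abs_of_nonneg (by positivity), ← ENNReal.ofReal_mul (by positivity)]
    congr 1
    have e0 : 1 - φ t = 1/(1+t^2) := by rw [hφ]; field_simp; ring
    have en : ((t:ℝ)^2) ^ (a-1) = t^q / t := by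
      rw [← Real.rpow_natCast t 2, ← Real.rpow_mul ht'.le,
        show ((2:ℕ):ℝ)*(a-1) = q - 1 by push_cast [ha]; ring,
        Real.rpow_sub ht', Real.rpow_one]
    have ed : ((1+t^2):ℝ) ^ (a-1) = (1+t^2)^a/(1+t^2) := by
      rw [Real.rpow_sub hc, Real.rpow_one]
    have e1 : (φ t) ^ (a-1) = t^q / t / ((1+t^2)^a / (1+t^2)) := by
      rw [hφ]
      show (t^2/(1+t^2)) ^ (a-1) = _
      rw [Real.div_rpow (sq_nonneg t) hc.le, en, ed]
    have e2 : (1 - φ t) ^ (-a) = (1+t^2)^a := by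
      rw [e0, one_div, Real.inv_rpow hc.le, Real.rpow_neg hc.le, inv_inv]
    rw [e1, e2]
    have h4 : (0:ℝ) < (1+t^2)^a := Real.rpow_pos_of_pos hc a
    field_simp
  rw [setLIntegral_congr_fun measurableSet_Ioi hptwise] at key
  have hsin : Real.sin (Real.pi * a) = Real.cos (Real.pi * q / 2) := by
    rw [show Real.pi * a = Real.pi * q / 2 + Real.pi/2 by rw [ha]; ring,
      Real.sin_add_pi_div_two]
  have hcos : 0 < Real.cos (Real.pi * q / 2) := by
    apply Real.cos_pos_of_mem_Ioo
    constructor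
    · nlinarith [Real.pi_pos]
    · nlinarith [Real.pi_pos]
  have hmeas : Measurable fun t : ℝ => ENNReal.ofReal (t ^ q / (1 + t^2)) := by
    fun_prop
  have key2 : (2:ℝ≥0∞) * ∫⁻ t in Ioi (0:ℝ), ENNReal.ofReal (t ^ q / (1 + t^2))
      = (2:ℝ≥0∞) * ENNReal.ofReal (Real.pi / (2 * Real.cos (Real.pi * q / 2))) := by
    calc (2:ℝ≥0∞) * ∫⁻ t in Ioi (0:ℝ), ENNReal.ofReal (t ^ q / (1 + t^2))
        = ∫⁻ t in Ioi (0:ℝ), ENNReal.ofReal (2 * (t ^ q / (1 + t^2))) := by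
          rw [← lintegral_const_mul 2 hmeas]
          exact lintegral_congr fun t => by
            rw [ENNReal.ofReal_mul (by norm_num : (0:ℝ) ≤ 2), ENNReal.ofReal_ofNat]
      _ = ENNReal.ofReal (Real.pi / Real.sin (Real.pi * a)) := key
      _ = (2:ℝ≥0∞) * ENNReal.ofReal (Real.pi / (2 * Real.cos (Real.pi * q / 2))) := by
          rw [hsin, ← ENNReal.ofReal_ofNat 2,
            ← ENNReal.ofReal_mul (by norm_num : (0:ℝ) ≤ 2)]
          congr 1
          field_simp
  exact (ENNReal.mul_right_inj (by norm_num) (by norm_num)).1 key2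

private theorem qdensH_hasDeriv (u v : ℝ) (hu : 0 < u) (hv : 0 < v) (x : ℝ) :
    HasDerivAt (fun y : ℝ => (1/Real.pi) * Real.arctan ((y^2+v^2-u^2)/(2*u*v)))
      (qdensH u v x) x := by
  have hg : HasDerivAt (fun y : ℝ => (y^2+v^2-u^2)/(2*u*v)) (2*x/(2*u*v)) x := by
    have := ((hasDerivAt_pow 2 x).add_const (v^2-u^2)).div_const (2*u*v)
    convert this using 1
    · rfl
    · rfl
    · funext y; ring
    · norm_num
  have h1 := (hg.arctan).const_mul (1/Real.pi)
  convert h1 using 1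
  · rfl
  · rfl
  unfold qdensH
  have hπ := Real.pi_ne_zero
  have huv : (2*u*v) ≠ 0 := by positivity
  have hd1 : (0:ℝ) < 1 + ((x^2+v^2-u^2)/(2*u*v))^2 := by positivity
  have hd2 : (0:ℝ) < 4*u^2*v^2 + (x^2+v^2-u^2)^2 := by positivity
  field_simp
  ring

private theorem qdensH_mass_le (u v : ℝ) (hu : 0 < u) (hv : 0 < v) :
    ∫⁻ x in Ioi (0:ℝ), ENNReal.ofReal (qdensH u v x) ≤ 1 := by
  set F : ℝ → ℝ := fun y => (1/Real.pi) * Real.arctan ((y^2+v^2-u^2)/(2*u*v)) with hF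
  have hderiv : ∀ x ∈ Ioi (0:ℝ), HasDerivAt F (qdensH u v x) x :=
    fun x _ => qdensH_hasDeriv u v hu hv x
  have hnn : ∀ x ∈ Ioi (0:ℝ), 0 ≤ qdensH u v x := by
    intro x hx
    have hx' : (0:ℝ) < x := hx
    unfold qdensH
    have h1 : (0:ℝ) ≤ (4 / Real.pi) * (u * v * x) := by positivity
    have h2 : (0:ℝ) < 4*u^2*v^2 + (x^2+v^2-u^2)^2 := by positivity
    exact div_nonneg h1 h2.le
  have hcont : ContinuousWithinAt F (Ici 0) 0 :=
    ((qdensH_hasDeriv u v hu hv 0).continuousAt).continuousWithinAt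
  have htend : Tendsto F atTop (𝓝 ((1/Real.pi) * (Real.pi/2))) := by
    apply Tendsto.const_mul
    have hinner : Tendsto (fun y : ℝ => (y^2+v^2-u^2)/(2*u*v)) atTop atTop := by
      have h1 : Tendsto (fun y : ℝ => y^2 + (v^2-u^2)) atTop atTop :=
        tendsto_atTop_add_const_right _ _ (tendsto_pow_atTop two_ne_zero)
      exact (h1.atTop_div_const (show (0:ℝ) < 2*u*v by positivity)).congr (fun y => by ring)
    exact (Real.tendsto_arctan_atTop.mono_right nhdsWithin_le_nhds).comp hinner
  have hInt : IntegrableOn (qdensH u v) (Ioi 0) :=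
    integrableOn_Ioi_deriv_of_nonneg hcont hderiv hnn htend
  have hval : ∫ x in Ioi (0:ℝ), qdensH u v x = (1/Real.pi) * (Real.pi/2) - F 0 :=
    integral_Ioi_of_hasDerivAt_of_tendsto hcont hderiv hInt htend
  have hnnae : 0 ≤ᵐ[volume.restrict (Ioi (0:ℝ))] qdensH u v := by
    filter_upwards [ae_restrict_mem measurableSet_Ioi] with x hx using hnn x hx
  rw [← ofReal_integral_eq_lintegral_ofReal hInt hnnae, hval]
  rw [show (1:ℝ≥0∞) = ENNReal.ofReal 1 by simp]
  apply ENNReal.ofReal_le_ofReal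
  have hπ := Real.pi_pos
  have harc := Real.neg_pi_div_two_lt_arctan ((0^2+v^2-u^2)/(2*u*v))
  have hF0 : F 0 = (1/Real.pi) * Real.arctan ((0^2+v^2-u^2)/(2*u*v)) := rfl
  rw [hF0]
  rw [show (1/Real.pi) * (Real.pi/2) - (1/Real.pi) * Real.arctan ((0^2+v^2-u^2)/(2*u*v))
      = (Real.pi/2 - Real.arctan ((0^2+v^2-u^2)/(2*u*v)))/Real.pi by field_simp]
  rw [div_le_one hπ]
  linarith

private theorem qdens_key (u v : ℝ) (hu : 0 < u) (hv : 0 < v) {p : ℝ}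
    (hp1 : 1 ≤ p) (hp2 : p < 2) :
    ∫⁻ x in Ici (0:ℝ), ENNReal.ofReal (qdensH u v x * x ^ p)
      ≤ ENNReal.ofReal (|u^2 - v^2| ^ (p/2)
          + (2:ℝ)^(p/2) * (u*v)^(p/2) / Real.cos (p * Real.pi/4)) := by
  set q : ℝ := p/2 with hqdef
  set aa : ℝ := u^2 - v^2 with haa
  set γ : ℝ := 2*(u*v) with hγdef
  have hγ : 0 < γ := by rw [hγdef]; positivity
  have hq0 : 0 < q := by rw [hqdef]; linarith
  have hq1 : q < 1 := by rw [hqdef]; linarith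
  have hπ := Real.pi_pos
  have hcos : 0 < Real.cos (Real.pi * q / 2) := by
    apply Real.cos_pos_of_mem_Ioo
    constructor <;> nlinarith [Real.pi_pos]
  set c : ℝ := Real.cos (Real.pi * q / 2) with hcdef
  have hdnn : ∀ x : ℝ, 0 < x → 0 ≤ qdensH u v x := by
    intro x hx
    unfold qdensH
    have h1 : (0:ℝ) ≤ (4 / Real.pi) * (u * v * x) := by positivity
    have h2 : (0:ℝ) < 4*u^2*v^2 + (x^2+v^2-u^2)^2 := by positivity
    exact div_nonneg h1 h2.le
  have hqdm : Measurable (fun x : ℝ => qdensH u v x) := by unfold qdensH; fun_prop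
  set k : ℝ → ℝ≥0∞ := fun w => ENNReal.ofReal (γ^q/Real.pi * (w^q/(1+w^2))) with hk
  have hkint : ∫⁻ w in Ioi (0:ℝ), k w = ENNReal.ofReal (γ^q/(2*c)) := by
    calc ∫⁻ w in Ioi (0:ℝ), k w
        = ∫⁻ w in Ioi (0:ℝ),
            ENNReal.ofReal (γ^q/Real.pi) * ENNReal.ofReal (w^q/(1+w^2)) :=
          lintegral_congr fun w => ENNReal.ofReal_mul (by positivity)
      _ = ENNReal.ofReal (γ^q/Real.pi) * ∫⁻ w in Ioi (0:ℝ), ENNReal.ofReal (w^q/(1+w^2)) :=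
          lintegral_const_mul _ (by fun_prop)
      _ = ENNReal.ofReal (γ^q/Real.pi) * ENNReal.ofReal (Real.pi/(2*c)) := by
          rw [core_lint hq0 hq1]
      _ = ENNReal.ofReal (γ^q/(2*c)) := by
          rw [← ENNReal.ofReal_mul (by positivity)]
          congr 1
          field_simp
  set Sp : Set ℝ := {x : ℝ | 0 < x ∧ aa < x^2} with hSp
  set Sm : Set ℝ := {x : ℝ | 0 < x ∧ x^2 < aa} with hSm
  have hSpm : MeasurableSet Sp := by
    have h : Sp = Ioi 0 ∩ {x : ℝ | aa < x^2} := by ext x; simp [hSp, mem_Ioi]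
    rw [h]
    exact measurableSet_Ioi.inter (measurableSet_lt measurable_const (by fun_prop))
  have hSmm : MeasurableSet Sm := by
    have h : Sm = Ioi 0 ∩ {x : ℝ | x^2 < aa} := by ext x; simp [hSm, mem_Ioi]
    rw [h]
    exact measurableSet_Ioi.inter (measurableSet_lt (by fun_prop) measurable_const)
  have hSple : ∫⁻ x in Sp, ENNReal.ofReal (qdensH u v x * |x^2-aa|^q)
      ≤ ENNReal.ofReal (γ^q/(2*c)) := by
    have hd : ∀ x ∈ Sp, HasDerivWithinAt (fun y : ℝ => (y^2 - aa)/γ) (2*x/γ) Sp x := by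
      intro x _
      have h := (((hasDerivAt_pow 2 x).sub_const aa).div_const γ).hasDerivWithinAt (s := Sp)
      convert h using 1
      · rfl
      · rfl
      norm_num
    have hinj : InjOn (fun y : ℝ => (y^2 - aa)/γ) Sp := by
      intro x hx y hy h
      simp only at h
      have h2 : x^2 = y^2 := by
        field_simp at h
        linarith
      calc x = Real.sqrt (x^2) := (Real.sqrt_sq hx.1.le).symm
        _ = Real.sqrt (y^2) := by rw [h2]
        _ = y := Real.sqrt_sq hy.1.le
    have himg : (fun y : ℝ => (y^2 - aa)/γ) '' Sp ⊆ Ioi 0 := by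
      rintro _ ⟨x, hx, rfl⟩
      exact div_pos (sub_pos.2 hx.2) hγ
    have hpt : ∀ x ∈ Sp, ENNReal.ofReal (qdensH u v x * |x^2-aa|^q)
        = ENNReal.ofReal |2*x/γ| * k ((x^2 - aa)/γ) := by
      intro x hx
      have hx1 : 0 < x := hx.1
      have hx2 : aa < x^2 := hx.2
      rw [hk]
      rw [← ENNReal.ofReal_mul (abs_nonneg _)]
      congr 1
      rw [abs_of_pos (by positivity : (0:ℝ) < 2*x/γ),
        abs_of_pos (sub_pos.2 hx2),
        Real.div_rpow (sub_pos.2 hx2).le hγ.le]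
      have hγq : (0:ℝ) < γ^q := Real.rpow_pos_of_pos hγ q
      have hden2 : (0:ℝ) < 1 + ((x^2-aa)/γ)^2 := by positivity
      unfold qdensH
      rw [haa, hγdef] at *
      have h4 : (0:ℝ) < 4*u^2*v^2 + (x^2+v^2-u^2)^2 := by positivity
      field_simp
      ring
    rw [setLIntegral_congr_fun hSpm hpt,
      ← lintegral_image_eq_lintegral_abs_deriv_mul' hSpm hd hinj k]
    calc _ ≤ ∫⁻ w in Ioi (0:ℝ), k w := lintegral_mono_set himg
      _ = _ := hkint
  have hSmle : ∫⁻ x in Sm, ENNReal.ofReal (qdensH u v x * |x^2-aa|^q)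
      ≤ ENNReal.ofReal (γ^q/(2*c)) := by
    have hd : ∀ x ∈ Sm, HasDerivWithinAt (fun y : ℝ => (aa - y^2)/γ) (-(2*x)/γ) Sm x := by
      intro x _
      have h := (((hasDerivAt_pow 2 x).const_sub aa).div_const γ).hasDerivWithinAt (s := Sm)
      convert h using 1
      · rfl
      · rfl
      norm_num
    have hinj : InjOn (fun y : ℝ => (aa - y^2)/γ) Sm := by
      intro x hx y hy h
      simp only at h
      have h2 : x^2 = y^2 := by
        field_simp at h
        linarith
      calc x = Real.sqrt (x^2) := (Real.sqrt_sq hx.1.le).symm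
        _ = Real.sqrt (y^2) := by rw [h2]
        _ = y := Real.sqrt_sq hy.1.le
    have himg : (fun y : ℝ => (aa - y^2)/γ) '' Sm ⊆ Ioi 0 := by
      rintro _ ⟨x, hx, rfl⟩
      exact div_pos (sub_pos.2 hx.2) hγ
    have hpt : ∀ x ∈ Sm, ENNReal.ofReal (qdensH u v x * |x^2-aa|^q)
        = ENNReal.ofReal |(-(2*x))/γ| * k ((aa - x^2)/γ) := by
      intro x hx
      have hx1 : 0 < x := hx.1
      have hx2 : x^2 < aa := hx.2
      rw [hk]
      rw [← ENNReal.ofReal_mul (abs_nonneg _)]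
      congr 1
      rw [show |(-(2*x))/γ| = 2*x/γ by
        rw [abs_div, abs_neg, abs_of_pos (by positivity : (0:ℝ) < 2*x),
          abs_of_pos hγ]]
      rw [abs_sub_comm, abs_of_pos (sub_pos.2 hx2),
        Real.div_rpow (sub_pos.2 hx2).le hγ.le]
      have hγq : (0:ℝ) < γ^q := Real.rpow_pos_of_pos hγ q
      have hden2 : (0:ℝ) < 1 + ((aa-x^2)/γ)^2 := by positivity
      unfold qdensH
      rw [haa, hγdef] at *
      have h4 : (0:ℝ) < 4*u^2*v^2 + (x^2+v^2-u^2)^2 := by positivity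
      field_simp
      ring
    rw [setLIntegral_congr_fun hSmm hpt,
      ← lintegral_image_eq_lintegral_abs_deriv_mul' hSmm hd hinj k]
    calc _ ≤ ∫⁻ w in Ioi (0:ℝ), k w := lintegral_mono_set himg
      _ = _ := hkint
  have hcover : Ioi (0:ℝ) ⊆ Sp ∪ (Sm ∪ {Real.sqrt aa}) := by
    intro x hx
    have hx' : (0:ℝ) < x := hx
    rcases lt_trichotomy aa (x^2) with h|h|h
    · exact Or.inl ⟨hx', h⟩
    · refine Or.inr (Or.inr ?_)
      have : Real.sqrt aa = x := by rw [h]; exact Real.sqrt_sq hx'.le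
      simp [← this]
    · exact Or.inr (Or.inl ⟨hx', h⟩)
  have hterm2 : ∫⁻ x in Ioi (0:ℝ), ENNReal.ofReal (qdensH u v x * |x^2-aa|^q)
      ≤ ENNReal.ofReal (γ^q/c) := by
    calc ∫⁻ x in Ioi (0:ℝ), ENNReal.ofReal (qdensH u v x * |x^2-aa|^q)
        ≤ ∫⁻ x in Sp ∪ (Sm ∪ {Real.sqrt aa}),
            ENNReal.ofReal (qdensH u v x * |x^2-aa|^q) := lintegral_mono_set hcover
      _ ≤ (∫⁻ x in Sp, ENNReal.ofReal (qdensH u v x * |x^2-aa|^q))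
          + ∫⁻ x in Sm ∪ {Real.sqrt aa}, ENNReal.ofReal (qdensH u v x * |x^2-aa|^q) :=
          lintegral_union_le _ _ _
      _ ≤ (∫⁻ x in Sp, ENNReal.ofReal (qdensH u v x * |x^2-aa|^q))
          + ((∫⁻ x in Sm, ENNReal.ofReal (qdensH u v x * |x^2-aa|^q))
            + ∫⁻ x in ({Real.sqrt aa} : Set ℝ),
                ENNReal.ofReal (qdensH u v x * |x^2-aa|^q)) :=
          add_le_add_right (lintegral_union_le _ _ _) _
      _ ≤ ENNReal.ofReal (γ^q/(2*c)) + (ENNReal.ofReal (γ^q/(2*c)) + 0) := by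
          refine add_le_add hSple (add_le_add hSmle (le_of_eq ?_))
          rw [Measure.restrict_eq_zero.2 (measure_singleton _), lintegral_zero_measure]
      _ = ENNReal.ofReal (γ^q/c) := by
          rw [add_zero, ← ENNReal.ofReal_add (by positivity) (by positivity)]
          congr 1
          field_simp
          ring
  calc ∫⁻ x in Ici (0:ℝ), ENNReal.ofReal (qdensH u v x * x ^ p)
      = ∫⁻ x in Ioi (0:ℝ), ENNReal.ofReal (qdensH u v x * x ^ p) :=
        (setLIntegral_congr Ioi_ae_eq_Ici).symm
    _ ≤ ∫⁻ x in Ioi (0:ℝ), (ENNReal.ofReal (|aa|^q * qdensH u v x)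
          + ENNReal.ofReal (qdensH u v x * |x^2-aa|^q)) := by
        apply lintegral_mono_ae
        filter_upwards [ae_restrict_mem measurableSet_Ioi] with x hx
        have hx' : (0:ℝ) < x := hx
        have hd := hdnn x hx'
        rw [← ENNReal.ofReal_add (mul_nonneg (by positivity) hd)
          (mul_nonneg hd (by positivity))]
        apply ENNReal.ofReal_le_ofReal
        have hxp : x^p ≤ |aa|^q + |x^2-aa|^q := by
          have e1 : x^p = (x^2)^q := by
            rw [← Real.rpow_natCast x 2, ← Real.rpow_mul hx'.le]
            congr 1
            rw [hqdef]
            push_cast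
            ring
          rw [e1]
          calc (x^2)^q ≤ (|aa| + |x^2-aa|)^q := by
                apply Real.rpow_le_rpow (sq_nonneg x) ?_ hq0.le
                calc x^2 = aa + (x^2-aa) := by ring
                  _ ≤ |aa| + |x^2-aa| := add_le_add (le_abs_self _) (le_abs_self _)
            _ ≤ |aa|^q + |x^2-aa|^q :=
                real_rpow_add_le (abs_nonneg _) (abs_nonneg _) hq0.le hq1.le
        nlinarith [mul_le_mul_of_nonneg_left hxp hd]
    _ = (∫⁻ x in Ioi (0:ℝ), ENNReal.ofReal (|aa|^q * qdensH u v x))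
        + ∫⁻ x in Ioi (0:ℝ), ENNReal.ofReal (qdensH u v x * |x^2-aa|^q) :=
        lintegral_add_left (by exact (hqdm.const_mul _).ennreal_ofReal) _
    _ ≤ ENNReal.ofReal (|aa|^q) * 1 + ENNReal.ofReal (γ^q/c) := by
        refine add_le_add ?_ hterm2
        calc ∫⁻ x in Ioi (0:ℝ), ENNReal.ofReal (|aa|^q * qdensH u v x)
            = ∫⁻ x in Ioi (0:ℝ), ENNReal.ofReal (|aa|^q) * ENNReal.ofReal (qdensH u v x) :=
              lintegral_congr fun x => ENNReal.ofReal_mul (by positivity)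
          _ = ENNReal.ofReal (|aa|^q) * ∫⁻ x in Ioi (0:ℝ), ENNReal.ofReal (qdensH u v x) :=
              lintegral_const_mul _ hqdm.ennreal_ofReal
          _ ≤ ENNReal.ofReal (|aa|^q) * 1 :=
              mul_le_mul_right (qdensH_mass_le u v hu hv) _
    _ ≤ ENNReal.ofReal (|aa|^q + (2:ℝ)^q * (u*v)^q / Real.cos (p * Real.pi/4)) := by
        rw [mul_one, ← ENNReal.ofReal_add (by positivity) (by positivity)]
        apply ENNReal.ofReal_le_ofReal
        have hγeq : γ^q = (2:ℝ)^q * (u*v)^q := by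
          rw [hγdef, Real.mul_rpow (by norm_num) (mul_nonneg hu.le hv.le)]
        have hceq : Real.cos (p * Real.pi/4) = c := by
          rw [hcdef, hqdef]
          congr 1
          ring
        rw [hγeq, hceq]

private theorem qdensV_eq_qdensH (u v x : ℝ) : qdensV u v x = qdensH v u x := by
  unfold qdensV qdensH
  ring_nf

end Aux


/-- for `(u,v) ∈ [0,∞)²`, `p ∈ [1,2)` and both coordinates `i`,
`∫_E x_i^p Q_{(u,v)}(dx) ≤ |u² − v²|^{p/2} + 2^{p/2}(uv)^{p/2}/cos(pπ/4) < ∞`. -/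
theorem harmonic_measure_moment_bound (u v : ℝ) (hu : 0 ≤ u) (hv : 0 ≤ v)
    (p : ℝ) (hp1 : 1 ≤ p) (hp2 : p < 2) :
    (∫⁻ z, ENNReal.ofReal (z.1 ^ p) ∂(Qmeas (u, v))
      ≤ ENNReal.ofReal (|u ^ 2 - v ^ 2| ^ (p / 2)
          + (2 : ℝ) ^ (p / 2) * (u * v) ^ (p / 2) / Real.cos (p * Real.pi / 4))) ∧
    (∫⁻ z, ENNReal.ofReal (z.2 ^ p) ∂(Qmeas (u, v))
      ≤ ENNReal.ofReal (|u ^ 2 - v ^ 2| ^ (p / 2)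
          + (2 : ℝ) ^ (p / 2) * (u * v) ^ (p / 2) / Real.cos (p * Real.pi / 4))) := by
  have hp0 : p ≠ 0 := by linarith
  have hfm1 : Measurable fun z : ℝ × ℝ => ENNReal.ofReal (z.1 ^ p) := by fun_prop
  have hfm2 : Measurable fun z : ℝ × ℝ => ENNReal.ofReal (z.2 ^ p) := by fun_prop
  by_cases hcase : 0 < u ∧ 0 < v
  · obtain ⟨hu', hv'⟩ := hcase
    have hQ : Qmeas (u, v)
        = (((volume.restrict (Ici (0 : ℝ))).withDensity fun ubar =>
            ENNReal.ofReal (qdensH u v ubar)).map fun ubar : ℝ => (ubar, (0 : ℝ)))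
          + (((volume.restrict (Ici (0 : ℝ))).withDensity fun vbar =>
            ENNReal.ofReal (qdensV u v vbar)).map fun vbar : ℝ => ((0 : ℝ), vbar)) := by
      unfold Qmeas
      rw [if_pos (⟨hu', hv'⟩ : 0 < (u, v).1 ∧ 0 < (u, v).2)]
    have hdHm : Measurable fun ubar : ℝ => ENNReal.ofReal (qdensH u v ubar) := by
      unfold qdensH; fun_prop
    have hdVm : Measurable fun vbar : ℝ => ENNReal.ofReal (qdensV u v vbar) := by
      unfold qdensV; fun_prop
    have hmap1 : Measurable fun ubar : ℝ => (ubar, (0 : ℝ)) := by fun_prop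
    have hmap2 : Measurable fun vbar : ℝ => ((0 : ℝ), vbar) := by fun_prop
    constructor
    · rw [hQ, lintegral_add_measure, lintegral_map hfm1 hmap1, lintegral_map hfm1 hmap2]
      have hz : ∫⁻ vbar, ENNReal.ofReal ((((0:ℝ), vbar)).1 ^ p)
          ∂((volume.restrict (Ici (0 : ℝ))).withDensity fun vbar =>
              ENNReal.ofReal (qdensV u v vbar)) = 0 := by
        simp [Real.zero_rpow hp0]
      rw [hz, add_zero,
        lintegral_withDensity_eq_lintegral_mul _ hdHm (by fun_prop)]
      have hcongr : ∫⁻ ubar in Ici (0:ℝ),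
          ((fun ubar => ENNReal.ofReal (qdensH u v ubar))
            * fun a => ENNReal.ofReal ((a, (0:ℝ)).1 ^ p)) ubar
          = ∫⁻ x in Ici (0:ℝ), ENNReal.ofReal (qdensH u v x * x ^ p) := by
        refine setLIntegral_congr_fun measurableSet_Ici (fun x hx => ?_)
        have hxnn : (0:ℝ) ≤ x := hx
        have hdnn : 0 ≤ qdensH u v x := by
          unfold qdensH
          have h1 : (0:ℝ) ≤ (4 / Real.pi) * (u * v * x) := by positivity
          have h2 : (0:ℝ) < 4*u^2*v^2 + (x^2+v^2-u^2)^2 := by positivity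
          exact div_nonneg h1 h2.le
        simp only [Pi.mul_apply]
        rw [← ENNReal.ofReal_mul hdnn]
      rw [hcongr]
      exact qdens_key u v hu' hv' hp1 hp2
    · rw [hQ, lintegral_add_measure, lintegral_map hfm2 hmap1, lintegral_map hfm2 hmap2]
      have hz : ∫⁻ ubar, ENNReal.ofReal (((ubar, (0:ℝ))).2 ^ p)
          ∂((volume.restrict (Ici (0 : ℝ))).withDensity fun ubar =>
              ENNReal.ofReal (qdensH u v ubar)) = 0 := by
        simp [Real.zero_rpow hp0]
      rw [hz, zero_add,
        lintegral_withDensity_eq_lintegral_mul _ hdVm (by fun_prop)]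
      have hcongr : ∫⁻ vbar in Ici (0:ℝ),
          ((fun vbar => ENNReal.ofReal (qdensV u v vbar))
            * fun a => ENNReal.ofReal (((0:ℝ), a).2 ^ p)) vbar
          = ∫⁻ x in Ici (0:ℝ), ENNReal.ofReal (qdensH v u x * x ^ p) := by
        refine setLIntegral_congr_fun measurableSet_Ici (fun x hx => ?_)
        have hxnn : (0:ℝ) ≤ x := hx
        have hdnn : 0 ≤ qdensH v u x := by
          unfold qdensH
          have h1 : (0:ℝ) ≤ (4 / Real.pi) * (v * u * x) := by positivity
          have h2 : (0:ℝ) < 4*v^2*u^2 + (x^2+u^2-v^2)^2 := by positivity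
          exact div_nonneg h1 h2.le
        simp only [Pi.mul_apply]
        rw [qdensV_eq_qdensH, ← ENNReal.ofReal_mul hdnn]
      rw [hcongr]
      calc ∫⁻ x in Ici (0:ℝ), ENNReal.ofReal (qdensH v u x * x ^ p)
          ≤ ENNReal.ofReal (|v^2 - u^2| ^ (p/2)
              + (2:ℝ)^(p/2) * (v*u)^(p/2) / Real.cos (p * Real.pi/4)) :=
            qdens_key v u hv' hu' hp1 hp2
        _ = ENNReal.ofReal (|u ^ 2 - v ^ 2| ^ (p / 2)
              + (2:ℝ) ^ (p / 2) * (u * v) ^ (p / 2) / Real.cos (p * Real.pi / 4)) := by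
            rw [abs_sub_comm, mul_comm v u]
  · have hQ : Qmeas (u, v) = Measure.dirac (u, v) := by
      unfold Qmeas
      rw [if_neg hcase]
    have huv0 : u = 0 ∨ v = 0 := by
      rcases not_and_or.1 hcase with h | h
      · exact Or.inl (le_antisymm (not_lt.1 h) hu)
      · exact Or.inr (le_antisymm (not_lt.1 h) hv)
    have hRHSu : v = 0 → |u ^ 2 - v ^ 2| ^ (p / 2)
        + (2:ℝ) ^ (p / 2) * (u * v) ^ (p / 2) / Real.cos (p * Real.pi / 4) = u ^ p := by
      intro hv0
      rw [hv0]
      rw [mul_zero, Real.zero_rpow (by positivity : p/2 ≠ 0), mul_zero, zero_div, add_zero]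
      rw [show |u^2 - (0:ℝ)^2| = u^2 by
        rw [show u^2 - (0:ℝ)^2 = u^2 by ring]; exact abs_of_nonneg (by positivity)]
      rw [← Real.rpow_natCast u 2, ← Real.rpow_mul hu]
      congr 1
      push_cast
      ring
    have hRHSv : u = 0 → |u ^ 2 - v ^ 2| ^ (p / 2)
        + (2:ℝ) ^ (p / 2) * (u * v) ^ (p / 2) / Real.cos (p * Real.pi / 4) = v ^ p := by
      intro hu0
      rw [hu0]
      rw [zero_mul, Real.zero_rpow (by positivity : p/2 ≠ 0), mul_zero, zero_div, add_zero]
      rw [show |(0:ℝ)^2 - v^2| = v^2 by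
        rw [show (0:ℝ)^2 - v^2 = -(v^2) by ring, abs_neg]
        exact abs_of_nonneg (by positivity)]
      rw [← Real.rpow_natCast v 2, ← Real.rpow_mul hv]
      congr 1
      push_cast
      ring
    constructor
    · rw [hQ, lintegral_dirac' _ hfm1]
      rcases huv0 with h0 | h0
      · simp [h0, Real.zero_rpow hp0]
      · rw [hRHSu h0]
    · rw [hQ, lintegral_dirac' _ hfm2]
      rcases huv0 with h0 | h0
      · rw [hRHSv h0]
      · simp [h0, Real.zero_rpow hp0]
end

section
/- The rescaled harmonic measures ε^{−1} Q_{(1,ε)} converge vaguely, as ε ↓ 0, to the measure ν on E ∖ {(1,0)}: for every continuous function f : E → ℝ with compact support contained in E ∖ {(1,0)}, lim_{ε↓0} ε^{−1} ∫_E f dQ_{(1,ε)} = ∫_E f dν. -/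
open MeasureTheory ProbabilityTheory Filter Set
open scoped ENNReal NNReal Topology

section VagueHelpers
open MeasureTheory Filter Set
open scoped Topology NNReal ENNReal

private lemma integral_map_wd' (g : ℝ → ℝ) (hg : Measurable g) (hg0 : ∀ x ∈ Ici (0:ℝ), 0 ≤ g x)
    (φ : ℝ → ℝ×ℝ) (hφ : Continuous φ) (f : ℝ×ℝ → ℝ) (hf : Continuous f) :
    ∫ z, f z ∂(((volume.restrict (Ici (0:ℝ))).withDensity fun x => ENNReal.ofReal (g x)).map φ)
      = ∫ x in Ici (0:ℝ), g x * f (φ x) := by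
  rw [integral_map hφ.aemeasurable hf.aestronglyMeasurable]
  have h1 : (fun x => ENNReal.ofReal (g x)) = fun x => ((g x).toNNReal : ℝ≥0∞) := rfl
  rw [h1, integral_withDensity_eq_integral_smul hg.real_toNNReal]
  refine setIntegral_congr_fun measurableSet_Ici (fun x hx => ?_)
  simp [NNReal.smul_def, Real.coe_toNNReal _ (hg0 x hx)]

private lemma integrable_map_wd' (g : ℝ → ℝ) (hg : Measurable g) (hg0 : ∀ x ∈ Ici (0:ℝ), 0 ≤ g x)
    (φ : ℝ → ℝ×ℝ) (hφ : Continuous φ) (f : ℝ×ℝ → ℝ) (hf : Continuous f)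
    (h : Integrable (fun x => g x * f (φ x)) (volume.restrict (Ici (0:ℝ)))) :
    Integrable f
      (((volume.restrict (Ici (0:ℝ))).withDensity fun x => ENNReal.ofReal (g x)).map φ) := by
  rw [integrable_map_measure hf.aestronglyMeasurable hφ.aemeasurable]
  have h1 : (fun x => ENNReal.ofReal (g x)) = fun x => ((g x).toNNReal : ℝ≥0∞) := rfl
  rw [h1, integrable_withDensity_iff_integrable_coe_smul hg.real_toNNReal]
  refine h.congr ?_
  filter_upwards [ae_restrict_mem measurableSet_Ici] with x hx
  simp [NNReal.smul_def, Real.coe_toNNReal _ (hg0 x hx)]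

private lemma integrable_of_indicator_bound' (h : ℝ → ℝ)
    (hm : AEStronglyMeasurable h (volume.restrict (Ici (0:ℝ)))) (C R : ℝ)
    (hb : ∀ x ∈ Ici (0:ℝ), |h x| ≤ Set.indicator (Icc 0 R) (fun _ => C) x) :
    Integrable h (volume.restrict (Ici (0:ℝ))) := by
  refine Integrable.mono' (g := Set.indicator (Icc 0 R) fun _ => C)
    ((integrable_indicator_iff measurableSet_Icc).2
      (integrableOn_const (lt_of_le_of_lt (Measure.restrict_apply_le _ _)
        measure_Icc_lt_top).ne)) hm ?_
  filter_upwards [ae_restrict_mem measurableSet_Ici] with x hx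
  simpa using hb x hx

end VagueHelpers

open MeasureTheory Filter Set
open scoped Topology

set_option maxHeartbeats 2000000 in
/-- vague convergence `ε⁻¹ Q_(1,ε) → ν` on `E ∖ {(1,0)}` as `ε ↓ 0`: for every
continuous `f` with compact support avoiding `(1,0)`,
`lim_{ε↓0} ε⁻¹ ∫_E f dQ_(1,ε) = ∫_E f dν`. -/
theorem rescaled_harmonic_measure_vague_limit (f : ℝ × ℝ → ℝ) (hf : Continuous f)
    (hsupp : HasCompactSupport f) (hne : ((1 : ℝ), (0 : ℝ)) ∉ tsupport f) :
    Tendsto (fun ε : ℝ => ε⁻¹ * ∫ z, f z ∂(Qmeas (1, ε))) (𝓝[>] 0)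
      (𝓝 (∫ z, f z ∂nuMeas)) := by
  obtain ⟨M, hM⟩ := hsupp.exists_bound_of_continuous hf
  have hM0 : 0 ≤ M := le_trans (norm_nonneg _) (hM 0)
  obtain ⟨r0, hr0⟩ := hsupp.isBounded.subset_closedBall (0 : ℝ × ℝ)
  set R : ℝ := max r0 1 with hRdef
  have hR1 : (1:ℝ) ≤ R := le_max_right _ _
  have hR0 : (0:ℝ) ≤ R := by linarith
  have hRsupp : ∀ z ∈ tsupport f, ‖z‖ ≤ R := fun z hz =>
    le_trans (by simpa using hr0 hz) (le_max_left _ _)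
  obtain ⟨δ0, hδ0pos, hδ0⟩ := Metric.isOpen_iff.1 (isClosed_tsupport f).isOpen_compl _ hne
  set δ : ℝ := min δ0 1 with hδdef
  have hδpos : 0 < δ := lt_min hδ0pos one_pos
  have hδ1 : δ ≤ 1 := min_le_right _ _
  have hδball : Metric.ball ((1:ℝ),(0:ℝ)) δ ⊆ (tsupport f)ᶜ :=
    Subset.trans (Metric.ball_subset_ball (min_le_left _ _)) hδ0
  -- support facts
  have hfH : ∀ x : ℝ, f (x, 0) ≠ 0 → |x| ≤ R ∧ δ ≤ |x - 1| := by
    intro x h0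
    have hts : ((x, (0:ℝ))) ∈ tsupport f := subset_tsupport f h0
    refine ⟨le_trans (by simpa using norm_fst_le ((x, (0:ℝ)))) (hRsupp _ hts), ?_⟩
    by_contra hcon
    push_neg at hcon
    have hmem : ((x, (0:ℝ))) ∈ Metric.ball ((1:ℝ),(0:ℝ)) δ := by
      rw [Metric.mem_ball, Prod.dist_eq]
      exact max_lt (by rwa [Real.dist_eq]) (by simpa using hδpos)
    exact hδball hmem hts
  have hfV : ∀ x : ℝ, f (0, x) ≠ 0 → |x| ≤ R := by
    intro x h0
    have hts : (((0:ℝ), x)) ∈ tsupport f := subset_tsupport f h0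
    exact le_trans (by simpa using norm_snd_le (((0:ℝ), x))) (hRsupp _ hts)
  set FH : ℝ → ℝ → ℝ :=
    fun ε x => f (x, 0) * ((4/Real.pi) * x / (4*ε^2 + (x^2+ε^2-1)^2)) with hFH
  set FV : ℝ → ℝ → ℝ :=
    fun ε x => f (0, x) * ((4/Real.pi) * x / (4*ε^2 + (x^2+1-ε^2)^2)) with hFV
  have contH : Continuous fun u : ℝ => ((u, (0:ℝ)) : ℝ × ℝ) :=
    continuous_id.prodMk continuous_const
  have contV : Continuous fun v : ℝ => (((0:ℝ), v) : ℝ × ℝ) :=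
    continuous_const.prodMk continuous_id
  have measH : ∀ ε : ℝ, Measurable (FH ε) := fun ε =>
    (hf.comp (continuous_id.prodMk continuous_const)).measurable.mul
      ((measurable_const.mul measurable_id).div (by fun_prop))
  have measV : ∀ ε : ℝ, Measurable (FV ε) := fun ε =>
    (hf.comp (continuous_const.prodMk continuous_id)).measurable.mul
      ((measurable_const.mul measurable_id).div (by fun_prop))
  set CH : ℝ := M * ((4/Real.pi) * R / (δ^2/4)) with hCH
  have hCH0 : 0 ≤ CH := mul_nonneg hM0 (div_nonneg (by positivity) (by positivity))
  set CV : ℝ := M * ((4/Real.pi) * R / (9/16)) with hCV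
  have hCV0 : 0 ≤ CV := mul_nonneg hM0 (div_nonneg (by positivity) (by norm_num))
  have boundH : ∀ ε : ℝ, 0 ≤ ε → ε^2 ≤ δ/2 → ∀ x ∈ Ici (0:ℝ),
      |FH ε x| ≤ Set.indicator (Icc 0 R) (fun _ => CH) x := by
    intro ε hε hε2 x hx
    by_cases h0 : f (x, 0) = 0
    · simp only [hFH, h0, zero_mul, abs_zero]
      exact Set.indicator_nonneg (fun _ _ => hCH0) x
    · obtain ⟨hxR, hxδ⟩ := hfH x h0
      have hx0 : (0:ℝ) ≤ x := hx
      have hxR' : x ≤ R := le_trans (le_abs_self x) hxR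
      rw [Set.indicator_of_mem (Set.mem_Icc.2 ⟨hx0, hxR'⟩)]
      have hsq : (δ/2)^2 ≤ (x^2+ε^2-1)^2 := by
        rcases abs_cases (x-1) with ⟨habs, _⟩ | ⟨habs, _⟩
        · have h : δ ≤ x - 1 := by rwa [habs] at hxδ
          have hv : δ/2 ≤ x^2+ε^2-1 := by
            nlinarith [sq_nonneg ε, mul_nonneg (show (0:ℝ) ≤ x - 1 - δ by linarith)
              (show (0:ℝ) ≤ x + 1 by linarith), mul_nonneg hδpos.le hx0]
          exact pow_le_pow_left₀ (by positivity) hv 2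
        · have h : δ ≤ 1 - x := by rw [habs] at hxδ; linarith
          have hv : δ/2 ≤ -(x^2+ε^2-1) := by
            nlinarith [mul_nonneg (show (0:ℝ) ≤ 1-δ-x by linarith)
              (show (0:ℝ) ≤ 1-δ+x by linarith), mul_le_mul_of_nonneg_left hδ1 hδpos.le]
          calc (δ/2)^2 ≤ (-(x^2+ε^2-1))^2 := pow_le_pow_left₀ (by positivity) hv 2
            _ = (x^2+ε^2-1)^2 := by ring
      have hDpos : (0:ℝ) < δ^2/4 := by positivity
      have hD : δ^2/4 ≤ 4*ε^2 + (x^2+ε^2-1)^2 := by nlinarith [sq_nonneg ε]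
      have hq0 : 0 ≤ (4/Real.pi) * x / (4*ε^2 + (x^2+ε^2-1)^2) :=
        div_nonneg (mul_nonneg (by positivity) hx0) (by nlinarith)
      have hq : (4/Real.pi) * x / (4*ε^2 + (x^2+ε^2-1)^2) ≤ (4/Real.pi)*R/(δ^2/4) :=
        div_le_div₀ (by positivity) (mul_le_mul_of_nonneg_left hxR' (by positivity)) hDpos hD
      simp only [hFH, hCH]
      rw [abs_mul, abs_of_nonneg hq0]
      exact mul_le_mul (by simpa using hM (x, 0)) hq hq0 hM0
  have boundV : ∀ ε : ℝ, 0 ≤ ε → ε ≤ 1/2 → ∀ x ∈ Ici (0:ℝ),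
      |FV ε x| ≤ Set.indicator (Icc 0 R) (fun _ => CV) x := by
    intro ε hε hεh x hx
    by_cases h0 : f (0, x) = 0
    · simp only [hFV, h0, zero_mul, abs_zero]
      exact Set.indicator_nonneg (fun _ _ => hCV0) x
    · have hxR := hfV x h0
      have hx0 : (0:ℝ) ≤ x := hx
      have hxR' : x ≤ R := le_trans (le_abs_self x) hxR
      rw [Set.indicator_of_mem (Set.mem_Icc.2 ⟨hx0, hxR'⟩)]
      have hε2 : ε^2 ≤ 1/4 := by nlinarith
      have h1 : (3/4:ℝ) ≤ x^2+1-ε^2 := by nlinarith [sq_nonneg x]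
      have hD : (9/16:ℝ) ≤ 4*ε^2 + (x^2+1-ε^2)^2 := by
        nlinarith [sq_nonneg ε, mul_nonneg (show (0:ℝ) ≤ x^2+1-ε^2-3/4 by linarith)
          (show (0:ℝ) ≤ x^2+1-ε^2+3/4 by linarith)]
      have hq0 : 0 ≤ (4/Real.pi) * x / (4*ε^2 + (x^2+1-ε^2)^2) :=
        div_nonneg (mul_nonneg (by positivity) hx0) (by nlinarith)
      have hq : (4/Real.pi) * x / (4*ε^2 + (x^2+1-ε^2)^2) ≤ (4/Real.pi)*R/(9/16) :=
        div_le_div₀ (by positivity) (mul_le_mul_of_nonneg_left hxR' (by positivity))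
          (by norm_num) hD
      simp only [hFV, hCV]
      rw [abs_mul, abs_of_nonneg hq0]
      exact mul_le_mul (by simpa using hM (0, x)) hq hq0 hM0
  have intH : ∀ ε : ℝ, 0 ≤ ε → ε^2 ≤ δ/2 → Integrable (FH ε) (volume.restrict (Ici 0)) :=
    fun ε h1 h2 => integrable_of_indicator_bound' (FH ε) (measH ε).aestronglyMeasurable CH R
      (boundH ε h1 h2)
  have intV : ∀ ε : ℝ, 0 ≤ ε → ε ≤ 1/2 → Integrable (FV ε) (volume.restrict (Ici 0)) :=
    fun ε h1 h2 => integrable_of_indicator_bound' (FV ε) (measV ε).aestronglyMeasurable CV R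
      (boundV ε h1 h2)
  have hqH : ∀ ε x : ℝ, qdensH 1 ε x * f (x, 0) = ε * FH ε x := by
    intro ε x; simp only [hFH, qdensH]; ring
  have hqV : ∀ ε x : ℝ, qdensV 1 ε x * f (0, x) = ε * FV ε x := by
    intro ε x; simp only [hFV, qdensV]; ring
  set εm : ℝ := min (Real.sqrt (δ/2)) (1/2) with hεm
  have εmpos : 0 < εm := lt_min (Real.sqrt_pos.2 (by positivity)) (by norm_num)
  have hIoo : Ioo (0:ℝ) εm ∈ 𝓝[>] (0:ℝ) :=
    Ioo_mem_nhdsGT_of_mem (Set.mem_Ico.2 ⟨le_refl _, εmpos⟩)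
  have hεfacts : ∀ ε ∈ Ioo (0:ℝ) εm, ε^2 ≤ δ/2 ∧ ε ≤ 1/2 := by
    intro ε hε
    constructor
    · exact le_of_lt ((Real.lt_sqrt hε.1.le).1 (lt_of_lt_of_le hε.2 (min_le_left _ _)))
    · exact le_of_lt (lt_of_lt_of_le hε.2 (min_le_right _ _))
  have key : ∀ ε ∈ Ioo (0:ℝ) εm,
      ε⁻¹ * ∫ z, f z ∂(Qmeas (1, ε))
        = (∫ x in Ici (0:ℝ), FH ε x) + ∫ x in Ici (0:ℝ), FV ε x := by
    intro ε hε
    have hεpos : 0 < ε := hε.1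
    obtain ⟨hε2, hεh⟩ := hεfacts ε hε
    have measqH : Measurable (qdensH 1 ε) := by
      unfold qdensH; exact Measurable.div (by fun_prop) (by fun_prop)
    have measqV : Measurable (qdensV 1 ε) := by
      unfold qdensV; exact Measurable.div (by fun_prop) (by fun_prop)
    have qHnn : ∀ x ∈ Ici (0:ℝ), 0 ≤ qdensH 1 ε x := by
      intro x hx
      exact div_nonneg (mul_nonneg (by positivity)
        (mul_nonneg (mul_nonneg one_pos.le hεpos.le) hx)) (by positivity)
    have qVnn : ∀ x ∈ Ici (0:ℝ), 0 ≤ qdensV 1 ε x := by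
      intro x hx
      exact div_nonneg (mul_nonneg (by positivity)
        (mul_nonneg (mul_nonneg one_pos.le hεpos.le) hx)) (by positivity)
    have iH' : Integrable (fun x => qdensH 1 ε x * f ((x, (0:ℝ)))) (volume.restrict (Ici 0)) := by
      have heq : (fun x => qdensH 1 ε x * f ((x, (0:ℝ)))) = fun x => ε * FH ε x :=
        funext fun x => hqH ε x
      rw [heq]; exact (intH ε hεpos.le hε2).const_mul ε
    have iV' : Integrable (fun x => qdensV 1 ε x * f (((0:ℝ), x))) (volume.restrict (Ici 0)) := by
      have heq : (fun x => qdensV 1 ε x * f (((0:ℝ), x))) = fun x => ε * FV ε x :=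
        funext fun x => hqV ε x
      rw [heq]; exact (intV ε hεpos.le hεh).const_mul ε
    have hQ : Qmeas (1, ε)
        = (((volume.restrict (Ici (0 : ℝ))).withDensity fun ubar =>
              ENNReal.ofReal (qdensH 1 ε ubar)).map fun ubar : ℝ => (ubar, (0 : ℝ)))
          + (((volume.restrict (Ici (0 : ℝ))).withDensity fun vbar =>
              ENNReal.ofReal (qdensV 1 ε vbar)).map fun vbar : ℝ => ((0 : ℝ), vbar)) := by
      simp only [Qmeas]
      rw [if_pos (show (0:ℝ) < ((1:ℝ), ε).1 ∧ (0:ℝ) < ((1:ℝ), ε).2 from ⟨one_pos, hεpos⟩)]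
    rw [hQ, integral_add_measure
        (integrable_map_wd' _ measqH qHnn _ contH f hf iH')
        (integrable_map_wd' _ measqV qVnn _ contV f hf iV'),
      integral_map_wd' _ measqH qHnn _ contH f hf,
      integral_map_wd' _ measqV qVnn _ contV f hf,
      mul_add, ← integral_const_mul, ← integral_const_mul]
    congr 1
    · refine setIntegral_congr_fun measurableSet_Ici (fun x _ => ?_)
      show ε⁻¹ * (qdensH 1 ε x * f ((x, (0:ℝ)))) = FH ε x
      rw [hqH ε x]
      exact inv_mul_cancel_left₀ hεpos.ne' _
    · refine setIntegral_congr_fun measurableSet_Ici (fun x _ => ?_)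
      show ε⁻¹ * (qdensV 1 ε x * f (((0:ℝ), x))) = FV ε x
      rw [hqV ε x]
      exact inv_mul_cancel_left₀ hεpos.ne' _
  have hHeq : ∀ x : ℝ, (4/Real.pi)*x/((1-x)^2*(1+x)^2) * f ((x, (0:ℝ))) = FH 0 x := by
    intro x
    simp only [hFH]
    rw [show (1-x)^2*(1+x)^2 = 4*(0:ℝ)^2 + (x^2+(0:ℝ)^2-1)^2 by ring]
    ring
  have hVeq : ∀ x : ℝ, (4/Real.pi)*x/(1+x^2)^2 * f (((0:ℝ), x)) = FV 0 x := by
    intro x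
    simp only [hFV]
    rw [show (1+x^2)^2 = 4*(0:ℝ)^2 + (x^2+1-(0:ℝ)^2)^2 by ring]
    ring
  have hδ2 : (0:ℝ)^2 ≤ δ/2 := by nlinarith
  have nu_eq : ∫ z, f z ∂nuMeas = (∫ x in Ici (0:ℝ), FH 0 x) + ∫ x in Ici (0:ℝ), FV 0 x := by
    have measνH : Measurable fun u : ℝ => (4/Real.pi)*u/((1-u)^2*(1+u)^2) :=
      Measurable.div (by fun_prop) (by fun_prop)
    have measνV : Measurable fun v : ℝ => (4/Real.pi)*v/(1+v^2)^2 :=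
      Measurable.div (by fun_prop) (by fun_prop)
    have νHnn : ∀ x ∈ Ici (0:ℝ), 0 ≤ (4/Real.pi)*x/((1-x)^2*(1+x)^2) := fun x hx =>
      div_nonneg (mul_nonneg (by positivity) hx) (by positivity)
    have νVnn : ∀ x ∈ Ici (0:ℝ), 0 ≤ (4/Real.pi)*x/(1+x^2)^2 := fun x hx =>
      div_nonneg (mul_nonneg (by positivity) hx) (by positivity)
    have iH' : Integrable (fun x => (4/Real.pi)*x/((1-x)^2*(1+x)^2) * f ((x, (0:ℝ))))
        (volume.restrict (Ici 0)) := by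
      rw [funext hHeq]; exact intH 0 le_rfl hδ2
    have iV' : Integrable (fun x => (4/Real.pi)*x/(1+x^2)^2 * f (((0:ℝ), x)))
        (volume.restrict (Ici 0)) := by
      rw [funext hVeq]; exact intV 0 le_rfl (by norm_num)
    rw [show nuMeas = _ + _ from rfl, integral_add_measure
        (integrable_map_wd' _ measνH νHnn _ contH f hf iH')
        (integrable_map_wd' _ measνV νVnn _ contV f hf iV'),
      integral_map_wd' _ measνH νHnn _ contH f hf,
      integral_map_wd' _ measνV νVnn _ contV f hf]
    congr 1
    · exact setIntegral_congr_fun measurableSet_Ici (fun x _ => hHeq x)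
    · exact setIntegral_congr_fun measurableSet_Ici (fun x _ => hVeq x)
  have tendH : Tendsto (fun ε : ℝ => ∫ x in Ici (0:ℝ), FH ε x) (𝓝[>] 0)
      (𝓝 (∫ x in Ici (0:ℝ), FH 0 x)) := by
    refine tendsto_integral_filter_of_dominated_convergence
      (Set.indicator (Icc 0 R) (fun _ => CH)) ?_ ?_ ?_ ?_
    · exact Eventually.of_forall fun ε => (measH ε).aestronglyMeasurable
    · filter_upwards [hIoo] with ε hε
      filter_upwards [ae_restrict_mem measurableSet_Ici] with x hx
      simpa [Real.norm_eq_abs] using boundH ε hε.1.le (hεfacts ε hε).1 x hx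
    · exact (integrable_indicator_iff measurableSet_Icc).2
        (integrableOn_const (lt_of_le_of_lt (Measure.restrict_apply_le _ _)
          measure_Icc_lt_top).ne)
    · filter_upwards [ae_restrict_mem measurableSet_Ici] with x hx
      by_cases h0 : f (x, 0) = 0
      · simp only [hFH, h0, zero_mul]; exact tendsto_const_nhds
      · have hx1 : δ ≤ |x - 1| := (hfH x h0).2
        have hxne : x ≠ 1 := by
          intro h; rw [h] at hx1; simp at hx1; linarith
        have h2 : x^2 - 1 ≠ 0 := by
          intro h
          have hx2 : (x-1)*(x+1) = 0 := by nlinarith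
          rcases mul_eq_zero.1 hx2 with h' | h'
          · exact hxne (by linarith)
          · have : (0:ℝ) ≤ x := hx
            linarith
        have hden : 4*(0:ℝ)^2 + (x^2+(0:ℝ)^2-1)^2 ≠ 0 := by
          rw [show 4*(0:ℝ)^2 + (x^2+(0:ℝ)^2-1)^2 = (x^2-1)^2 by ring]
          exact pow_ne_zero 2 h2
        have hc : ContinuousAt (fun ε : ℝ => FH ε x) 0 := by
          simp only [hFH]
          exact continuousAt_const.mul (ContinuousAt.div continuousAt_const
            ((by fun_prop : Continuous fun ε : ℝ => 4*ε^2+(x^2+ε^2-1)^2).continuousAt) hden)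
        exact hc.tendsto.mono_left nhdsWithin_le_nhds
  have tendV : Tendsto (fun ε : ℝ => ∫ x in Ici (0:ℝ), FV ε x) (𝓝[>] 0)
      (𝓝 (∫ x in Ici (0:ℝ), FV 0 x)) := by
    refine tendsto_integral_filter_of_dominated_convergence
      (Set.indicator (Icc 0 R) (fun _ => CV)) ?_ ?_ ?_ ?_
    · exact Eventually.of_forall fun ε => (measV ε).aestronglyMeasurable
    · filter_upwards [hIoo] with ε hε
      filter_upwards [ae_restrict_mem measurableSet_Ici] with x hx
      simpa [Real.norm_eq_abs] using boundV ε hε.1.le (hεfacts ε hε).2 x hx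
    · exact (integrable_indicator_iff measurableSet_Icc).2
        (integrableOn_const (lt_of_le_of_lt (Measure.restrict_apply_le _ _)
          measure_Icc_lt_top).ne)
    · filter_upwards [ae_restrict_mem measurableSet_Ici] with x hx
      have hden : 4*(0:ℝ)^2 + (x^2+1-(0:ℝ)^2)^2 ≠ 0 := by
        rw [show 4*(0:ℝ)^2 + (x^2+1-(0:ℝ)^2)^2 = (x^2+1)^2 by ring]
        positivity
      have hc : ContinuousAt (fun ε : ℝ => FV ε x) 0 := by
        simp only [hFV]
        exact continuousAt_const.mul (ContinuousAt.div continuousAt_const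
          ((by fun_prop : Continuous fun ε : ℝ => 4*ε^2+(x^2+1-ε^2)^2).continuousAt) hden)
      exact hc.tendsto.mono_left nhdsWithin_le_nhds
  rw [nu_eq]
  refine Tendsto.congr' ?_ (tendH.add tendV)
  filter_upwards [hIoo] with ε hε
  exact (key ε hε).symm
end
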